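/- arXiv:1512.02778 — 6 statements merged into one kernel-verified Lean document; each statement's English description precedes it below -/
import Mathlib

section
/- Let R be a filtered ring with increasing filtration F such that the associated graded ring Gr(R) is commutative, and let M be a filtered R-module with two good filtrations F and G. Then the radicals of the annihilator ideals Ann_{Gr(R)}(Gr_F M) and Ann_{Gr(R)}(Gr_G M) in Gr(R) coincide. -/
section

variable {R M : Type*} [Ring R] [AddCommGroup M] [Module R M]

/-- `FR` is an exhaustive increasing `ℤ`-filtration of the ring `R`. -/
def IsRingFiltration' (FR : ℤ → AddSubgroup R) : Prop :=
  Monotone FR ∧ (1 : R) ∈ FR 0 ∧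
    (∀ i j : ℤ, ∀ a ∈ FR i, ∀ b ∈ FR j, a * b ∈ FR (i + j)) ∧
    (∀ r : R, ∃ i, r ∈ FR i)

/-- The associated graded ring of the filtration `FR` is commutative: commutators drop
filtration degree. -/
def HasCommGraded (FR : ℤ → AddSubgroup R) : Prop :=
  ∀ i j : ℤ, ∀ a ∈ FR i, ∀ b ∈ FR j, a * b - b * a ∈ FR (i + j - 1)

/-- `F` is a compatible, exhaustive, increasing, discrete-below filtration of the
`R`-module `M`, by submodules finitely generated over `FR 0`. -/
def IsModuleFiltration' (FR : ℤ → AddSubgroup R) (F : ℤ → AddSubgroup M) : Prop :=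
  Monotone F ∧ (∀ m : M, ∃ j, m ∈ F j) ∧ (∃ j₀, ∀ j ≤ j₀, F j = ⊥) ∧
    (∀ i j : ℤ, ∀ r ∈ FR i, ∀ m ∈ F j, r • m ∈ F (i + j)) ∧
    (∀ j : ℤ, ∃ S : Finset M, (↑S : Set M) ⊆ F j ∧
      F j = AddSubgroup.closure {y | ∃ t ∈ S, ∃ r ∈ FR 0, y = r • t})

/-- `F` is a good filtration: the associated graded module `Gr_F M` is finitely generated
over `Gr(R)`; equivalently, `F` is generated by finitely many homogeneous symbols. -/
def IsGoodFiltration (FR : ℤ → AddSubgroup R) (F : ℤ → AddSubgroup M) : Prop :=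
  ∃ T : Finset (ℤ × M), (∀ p ∈ T, p.2 ∈ F p.1) ∧
    ∀ j : ℤ, F j = AddSubgroup.closure {y | ∃ p ∈ T, ∃ r ∈ FR (j - p.1), y = r • p.2}

/-- The symbol in `Gr^k(R)` of `r ∈ F^k R` annihilates `Gr_F M`:
`r • F^j M ⊆ F^{j+k-1} M` for all `j`. -/
def SymbolAnnihilates (F : ℤ → AddSubgroup M) (r : R) (k : ℤ) : Prop :=
  ∀ j : ℤ, ∀ m ∈ F j, r • m ∈ F (j + k - 1)

end


section aux

variable {R M : Type*} [Ring R] [AddCommGroup M] [Module R M]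

/-- A good filtration is bounded above by any compatible exhaustive filtration, up to a shift. -/
lemma good_le_shift (FR : ℤ → AddSubgroup R) (F G : ℤ → AddSubgroup M)
    (hF : IsModuleFiltration' FR F) (hGgood : IsGoodFiltration FR G) :
    ∃ c : ℕ, ∀ j, G j ≤ F (j + c) := by
  obtain ⟨hFmono, hFexh, -, hFcompat, -⟩ := hF
  obtain ⟨T, hT1, hT2⟩ := hGgood
  choose f hf using hFexh
  refine ⟨T.sup (fun p => (f p.2 - p.1).toNat), fun j => ?_⟩
  rw [hT2 j, AddSubgroup.closure_le]
  rintro y ⟨p, hp, r, hr, rfl⟩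
  have h1 : r • p.2 ∈ F (j - p.1 + f p.2) := hFcompat _ _ r hr _ (hf p.2)
  refine hFmono ?_ h1
  have h2 : (f p.2 - p.1).toNat ≤ T.sup (fun p => (f p.2 - p.1).toNat) :=
    Finset.le_sup (f := fun p => (f p.2 - p.1).toNat) hp
  have h3 : (f p.2 - p.1 : ℤ) ≤ ((f p.2 - p.1).toNat : ℤ) := Int.self_le_toNat _
  have h4 : ((f p.2 - p.1).toNat : ℤ) ≤ ((T.sup (fun p => (f p.2 - p.1).toNat) : ℕ) : ℤ) := by
    exact_mod_cast h2
  omega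

/-- Iterating a degree-`d` shift. -/
lemma iterate_shift (F : ℤ → AddSubgroup M) (r : R) (d : ℤ)
    (h : ∀ j : ℤ, ∀ m ∈ F j, r • m ∈ F (j + d)) :
    ∀ t : ℕ, ∀ j : ℤ, ∀ m ∈ F j, r ^ t • m ∈ F (j + d * t) := by
  intro t
  induction t with
  | zero => intro j m hm; simpa using hm
  | succ t ih =>
    intro j m hm
    have h2 := ih (j + d) (r • m) (h j m hm)
    rw [pow_succ, mul_smul]
    convert h2 using 2
    push_cast
    ring

/-- Transfer of nilpotent annihilation between comparable filtrations. -/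
lemma transfer_ann (F G : ℤ → AddSubgroup M) (hGmono : Monotone G)
    (c : ℕ) (hGF : ∀ j, G j ≤ F (j + c)) (hFG : ∀ j, F j ≤ G (j + c))
    (k : ℤ) (r : R) (s : ℕ) (hs : 1 ≤ s)
    (hann : SymbolAnnihilates F (r ^ s) (k * s)) :
    ∃ s' : ℕ, 1 ≤ s' ∧ SymbolAnnihilates G (r ^ s') (k * s') := by
  refine ⟨s * (2 * c + 1), Nat.one_le_iff_ne_zero.2 (by positivity), ?_⟩
  intro j m hm
  have h1 : m ∈ F (j + c) := hGF j hm
  have hstep : ∀ j : ℤ, ∀ m ∈ F j, (r ^ s) • m ∈ F (j + (k * s - 1)) := by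
    intro j m hm
    have := hann j m hm
    rwa [add_sub_assoc] at this
  have h2 := iterate_shift F (r ^ s) (k * s - 1) hstep (2 * c + 1) (j + c) m h1
  have h3 := hFG _ h2
  rw [pow_mul]
  refine hGmono (le_of_eq ?_) h3
  push_cast
  ring

end aux

/-- Let `R` be a filtered ring with commutative associated graded ring, and let `M` be a
filtered `R`-module with two good filtrations `F` and `G`.  Then the radicals of the
annihilator ideals `Ann_{Gr R}(Gr_F M)` and `Ann_{Gr R}(Gr_G M)` coincide: a homogeneous
element of degree `k`, i.e. the symbol of some `r ∈ F^k R`, lies in the radical of the one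
annihilator (some power of the symbol, which is the symbol of `r^s` in degree `k*s`,
annihilates the graded module) if and only if it lies in the radical of the other. -/
theorem radical_ann_independent_of_good_filtration
    {R M : Type*} [Ring R] [AddCommGroup M] [Module R M]
    (FR : ℤ → AddSubgroup R) (hFR : IsRingFiltration' FR) (hcomm : HasCommGraded FR)
    (F G : ℤ → AddSubgroup M)
    (hF : IsModuleFiltration' FR F) (hG : IsModuleFiltration' FR G)
    (hFgood : IsGoodFiltration FR F) (hGgood : IsGoodFiltration FR G)
    (k : ℤ) (r : R) (hr : r ∈ FR k) :
    (∃ s : ℕ, 1 ≤ s ∧ SymbolAnnihilates F (r ^ s) (k * s)) ↔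
      (∃ s : ℕ, 1 ≤ s ∧ SymbolAnnihilates G (r ^ s) (k * s)) := by
  obtain ⟨c₁, hc₁⟩ := good_le_shift FR G F hG hFgood
  obtain ⟨c₂, hc₂⟩ := good_le_shift FR F G hF hGgood
  have hFmono := hF.1
  have hGmono := hG.1
  set c := max c₁ c₂ with hc
  have hFG : ∀ j, F j ≤ G (j + c) := fun j =>
    le_trans (hc₁ j)
      (hGmono (by have h : c₁ ≤ c := le_max_left c₁ c₂; omega))
  have hGF : ∀ j, G j ≤ F (j + c) := fun j =>
    le_trans (hc₂ j)
      (hFmono (by have h : c₂ ≤ c := le_max_right c₁ c₂; omega))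
  constructor
  · rintro ⟨s, hs, hann⟩
    exact transfer_ann F G hGmono c hGF hFG k r s hs hann
  · rintro ⟨s, hs, hann⟩
    exact transfer_ann G F hFmono c hFG hGF k r s hs hann
end

section
/- Let R be a filtered ring with commutative associated graded ring, and let M be an R-module with a compatible filtration F by finitely generated submodules of the degree-0 part. Then F is a good filtration if and only if there exists j₀ such that F^i R · F^j M = F^{i+j} M for all j ≥ j₀ and all i ≥ 0. -/
open AddSubgroup


section

variable {R M : Type*} [Ring R] [AddCommGroup M] [Module R M]

/-- `FR` is an exhaustive increasing `ℤ`-filtration of the ring `R`, zero in negative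
degrees, whose associated graded ring is commutative and generated in degree `1` over
degree `0`. -/
def IsDiffOpFiltration (FR : ℤ → AddSubgroup R) : Prop :=
  Monotone FR ∧ (1 : R) ∈ FR 0 ∧
    (∀ i j : ℤ, ∀ a ∈ FR i, ∀ b ∈ FR j, a * b ∈ FR (i + j)) ∧
    (∀ r : R, ∃ i, r ∈ FR i) ∧
    (∀ i : ℤ, i < 0 → FR i = ⊥) ∧
    (∀ i j : ℤ, ∀ a ∈ FR i, ∀ b ∈ FR j, a * b - b * a ∈ FR (i + j - 1)) ∧
    (∀ i : ℤ, 0 ≤ i →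
      (FR (i + 1) : Set R) ⊆
        ↑(AddSubgroup.closure ({y | ∃ b ∈ FR 1, ∃ c ∈ FR i, y = b * c} ∪ ↑(FR i))))

/-- `F` is a compatible, exhaustive, increasing, discrete-below filtration of the
`R`-module `M` by submodules finitely generated over `F^0 R`. -/
def IsCompatibleFiltration (FR : ℤ → AddSubgroup R) (F : ℤ → AddSubgroup M) : Prop :=
  Monotone F ∧ (∀ m : M, ∃ j, m ∈ F j) ∧ (∃ j₀, ∀ j ≤ j₀, F j = ⊥) ∧
    (∀ i j : ℤ, ∀ r ∈ FR i, ∀ m ∈ F j, r • m ∈ F (i + j)) ∧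
    (∀ j : ℤ, ∃ S : Finset M, (↑S : Set M) ⊆ F j ∧
      F j = AddSubgroup.closure {y | ∃ t ∈ S, ∃ r ∈ FR 0, y = r • t})

lemma mem_closure_image' {A B : Type*} [AddCommGroup A] [AddCommGroup B]
    (f : A →+ B) {S : Set A} {x : A} (hx : x ∈ closure S) : f x ∈ closure (f '' S) := by
  rw [← AddMonoidHom.map_closure]
  exact AddSubgroup.mem_map_of_mem f hx

lemma FR_decompose (FR : ℤ → AddSubgroup R) (hmono : Monotone FR) (hone : (1 : R) ∈ FR 0)
    (hmul : ∀ i j : ℤ, ∀ a ∈ FR i, ∀ b ∈ FR j, a * b ∈ FR (i + j))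
    (hgen : ∀ i : ℤ, 0 ≤ i →
      (FR (i + 1) : Set R) ⊆
        ↑(AddSubgroup.closure ({y | ∃ b ∈ FR 1, ∃ c ∈ FR i, y = b * c} ∪ ↑(FR i)))) :
    ∀ n : ℕ, ∀ d : ℤ, 0 ≤ d → (FR (n + d) : Set R) ⊆
      ↑(closure {y : R | ∃ b ∈ FR (n : ℤ), ∃ c ∈ FR d, y = b * c}) := by
  intro n
  induction n with
  | zero =>
    intro d hd a ha
    refine subset_closure ⟨1, hone, a, ?_, (one_mul a).symm⟩
    simpa using ha
  | succ n ih =>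
    intro d hd a ha
    have ha' : a ∈ (FR ((n + d) + 1) : Set R) := by
      have : ((n : ℤ) + 1 + d) = ((n : ℤ) + d) + 1 := by ring
      push_cast at ha ⊢
      rwa [this] at ha
    have h1 := hgen ((n : ℤ) + d) (by positivity) ha'
    refine closure_induction (fun x hx => ?_) (zero_mem _)
      (fun x y _ _ hx hy => add_mem hx hy) (fun x _ hx => neg_mem hx) h1
    rcases hx with ⟨b, hb, c, hc, rfl⟩ | hx
    · have hc' : c ∈ closure {y : R | ∃ b ∈ FR (n : ℤ), ∃ c ∈ FR d, y = b * c} :=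
        ih d hd hc
      have := mem_closure_image' (AddMonoidHom.mulLeft b) hc'
      refine closure_le _ |>.mpr ?_ this
      rintro _ ⟨_, ⟨b', hb', c', hc', rfl⟩, rfl⟩
      refine subset_closure ⟨b * b', ?_, c', hc', ?_⟩
      · have := hmul 1 n b hb b' hb'
        have h2 : ((1 : ℤ) + n) = ((n : ℕ) + 1 : ℕ) := by push_cast; ring
        rwa [h2] at this
      · simp [AddMonoidHom.mulLeft, mul_assoc]
    · have := ih d hd hx
      refine closure_mono ?_ this
      rintro _ ⟨b', hb', c', hc', rfl⟩
      exact ⟨b', hmono (by push_cast; omega) hb', c', hc', rfl⟩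

/-- `r ↦ r • m` as an additive hom. -/
def smulHom (m : M) : R →+ M where
  toFun r := r • m
  map_zero' := zero_smul R m
  map_add' a b := add_smul a b m

end

/-- Let `R` be a filtered ring with commutative associated graded ring generated in degree
one, and `M` an `R`-module with a compatible filtration `F` by finitely generated
submodules.  Then `F` is a good filtration (the associated graded module `Gr_F M` is
finitely generated over `Gr R`, i.e. `F` is generated by finitely many homogeneous
symbols) if and only if there exists `j₀` such that `F^i R • F^j M = F^{i+j} M` for all
`j ≥ j₀` and all `i ≥ 0`. -/
theorem good_filtration_iff_eventually_generated
    {R M : Type*} [Ring R] [AddCommGroup M] [Module R M]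
    (FR : ℤ → AddSubgroup R) (hFR : IsDiffOpFiltration FR)
    (F : ℤ → AddSubgroup M) (hF : IsCompatibleFiltration FR F) :
    (∃ T : Finset (ℤ × M), (∀ p ∈ T, p.2 ∈ F p.1) ∧
        ∀ j : ℤ, F j = AddSubgroup.closure {y | ∃ p ∈ T, ∃ r ∈ FR (j - p.1), y = r • p.2}) ↔
      (∃ j₀ : ℤ, ∀ j ≥ j₀, ∀ i : ℤ, 0 ≤ i →
        F (i + j) = AddSubgroup.closure {y | ∃ r ∈ FR i, ∃ m ∈ F j, y = r • m}) := by
  obtain ⟨hmono, hone, hmul, _hexh, hneg, _hcomm, hgen⟩ := hFR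
  obtain ⟨hFmono, _hFexh, ⟨j₁, hj₁⟩, hsmul, hfg⟩ := hF
  constructor
  · rintro ⟨T, hT1, hT2⟩
    obtain ⟨j₀, hj₀⟩ := Finset.exists_le (T.image Prod.fst)
    refine ⟨j₀, fun j hj i hi => ?_⟩
    apply le_antisymm
    · rw [hT2 (i + j)]
      refine (closure_le _).mpr ?_
      rintro _ ⟨p, hp, r, hr, rfl⟩
      have hp1 : p.1 ≤ j₀ := hj₀ p.1 (Finset.mem_image_of_mem Prod.fst hp)
      have hd : (0 : ℤ) ≤ j - p.1 := by omega
      have hr' : r ∈ (FR ((i.toNat : ℤ) + (j - p.1)) : Set R) := by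
        have : (i.toNat : ℤ) + (j - p.1) = i + j - p.1 := by omega
        rwa [this]
      have hrc := FR_decompose FR hmono hone hmul hgen i.toNat (j - p.1) hd hr'
      have := mem_closure_image' (smulHom (M := M) p.2) hrc
      refine (closure_le _).mpr ?_ this
      rintro _ ⟨_, ⟨b, hb, c, hc, rfl⟩, rfl⟩
      have hcm : c • p.2 ∈ F j := by
        have := hsmul (j - p.1) p.1 c hc p.2 (hT1 p hp)
        rwa [sub_add_cancel] at this
      refine subset_closure ⟨b, ?_, c • p.2, hcm, ?_⟩
      · rwa [Int.toNat_of_nonneg hi] at hb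
      · simp [smulHom, mul_smul]
    · refine (closure_le _).mpr ?_
      rintro _ ⟨r, hr, m, hm, rfl⟩
      exact hsmul i j r hr m hm
  · rintro ⟨j₀, h⟩
    classical
    set j₂ := min j₁ j₀ with hj₂
    choose S hS1 hS2 using hfg
    refine ⟨(Finset.Icc j₂ j₀).biUnion (fun j => (S j).image (fun t => (j, t))), ?_, ?_⟩
    · rintro p hp
      simp only [Finset.mem_biUnion, Finset.mem_image] at hp
      obtain ⟨j, _, t, ht, rfl⟩ := hp
      exact hS1 j ht
    · intro j
      apply le_antisymm
      · rcases le_or_gt j j₀ with hle | hlt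
        · rcases lt_or_ge j j₂ with hlt2 | hge2
          · rw [hj₁ j (by omega)]
            exact bot_le
          · rw [hS2 j]
            refine (closure_le _).mpr ?_
            rintro _ ⟨t, ht, r, hr, rfl⟩
            refine subset_closure ⟨(j, t), ?_, r, by simpa using hr, rfl⟩
            simp only [Finset.mem_biUnion, Finset.mem_image]
            exact ⟨j, Finset.mem_Icc.mpr ⟨hge2, hle⟩, t, ht, rfl⟩
        · have hj : F ((j - j₀) + j₀) = closure {y | ∃ r ∈ FR (j - j₀), ∃ m ∈ F j₀, y = r • m} :=
            h j₀ le_rfl (j - j₀) (by omega)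
          rw [show j = (j - j₀) + j₀ by ring, hj]
          refine (closure_le _).mpr ?_
          rintro _ ⟨r, hr, m, hm, rfl⟩
          have hm' : m ∈ closure {y : M | ∃ t ∈ S j₀, ∃ r ∈ FR 0, y = r • t} := by
            rw [← hS2 j₀]; exact hm
          have := mem_closure_image' (DistribMulAction.toAddMonoidHom M r) hm'
          refine (closure_le _).mpr ?_ this
          rintro _ ⟨_, ⟨t, ht, r₀, hr₀, rfl⟩, rfl⟩
          refine subset_closure ⟨(j₀, t), ?_, r * r₀, ?_, ?_⟩
          · simp only [Finset.mem_biUnion, Finset.mem_image]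
            exact ⟨j₀, Finset.mem_Icc.mpr ⟨min_le_right _ _, le_rfl⟩, t, ht, rfl⟩
          · have := hmul (j - j₀) 0 r hr r₀ hr₀
            have he : j - j₀ + 0 = (j - j₀ + j₀) - j₀ := by ring
            rwa [he] at this
          · simp [DistribMulAction.toAddMonoidHom, mul_smul]
      · refine (closure_le _).mpr ?_
        rintro _ ⟨p, hp, r, hr, rfl⟩
        have hp2 : p.2 ∈ F p.1 := by
          simp only [Finset.mem_biUnion, Finset.mem_image] at hp
          obtain ⟨j', _, t, ht, rfl⟩ := hp
          exact hS1 j' ht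
        have := hsmul (j - p.1) p.1 r hr p.2 hp2
        rwa [sub_add_cancel] at this
end

section
/- The ideal (x_1 ξ_1, …, x_r ξ_r, ξ_{r+1}, …, ξ_n) in the polynomial ring K[x_1,…,x_n,ξ_1,…,ξ_n] over a field K is a radical ideal, and its zero set is the union of the conormal varieties of the coordinate subspaces {x_{i_1} = ⋯ = x_{i_k} = 0} for subsets {i_1,…,i_k} ⊆ {1,…,r}. -/
open MvPolynomial

namespace NCC

variable {K : Type*} [Field K] {n : ℕ}

/-- The substitution that kills the variables in `Z` and fixes all other variables. -/
noncomputable def kil (Z : Finset (Fin n ⊕ Fin n)) :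
    MvPolynomial (Fin n ⊕ Fin n) K →ₐ[K] MvPolynomial (Fin n ⊕ Fin n) K :=
  aeval (fun w => if w ∈ Z then 0 else X w)

lemma kil_X (Z : Finset (Fin n ⊕ Fin n)) (w : Fin n ⊕ Fin n) :
    kil (K := K) Z (X w) = if w ∈ Z then 0 else X w := by
  simp [kil]

lemma kil_monomial (Z : Finset (Fin n ⊕ Fin n)) (m : (Fin n ⊕ Fin n) →₀ ℕ) (c : K) :
    kil Z (monomial m c) = if ∀ w ∈ Z, m w = 0 then monomial m c else 0 := by
  rw [kil, aeval_monomial]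
  split_ifs with h
  · have h2 : (m.prod fun w k => (if w ∈ Z then 0 else X w : MvPolynomial _ K) ^ k)
        = m.prod fun w k => (X w) ^ k := by
      refine Finset.prod_congr rfl fun w hw => ?_
      dsimp only
      rw [if_neg fun hwZ => Finsupp.mem_support_iff.mp hw (h w hwZ)]
    rw [h2, monomial_eq, algebraMap_eq]
  · push_neg at h
    obtain ⟨w, hwZ, hmw⟩ := h
    have h3 : (fun w k => (if w ∈ Z then 0 else X w : MvPolynomial _ K) ^ k) w (m w) = 0 := by
      dsimp only
      rw [if_pos hwZ, zero_pow hmw]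
    have h2 : (m.prod fun w k => (if w ∈ Z then 0 else X w : MvPolynomial _ K) ^ k) = 0 :=
      Finset.prod_eq_zero (Finsupp.mem_support_iff.mpr hmw) h3
    rw [h2, mul_zero]

lemma coeff_kil (Z : Finset (Fin n ⊕ Fin n)) (f : MvPolynomial (Fin n ⊕ Fin n) K)
    (d : (Fin n ⊕ Fin n) →₀ ℕ) :
    coeff d (kil Z f) = if ∀ w ∈ Z, d w = 0 then coeff d f else 0 := by
  conv_lhs => rw [f.as_sum, map_sum]
  rw [coeff_sum]
  simp_rw [kil_monomial]
  rw [Finset.sum_eq_single d]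
  · split_ifs with h
    · rw [coeff_monomial, if_pos rfl]
    · rw [coeff_zero]
  · intro b _ hbd
    split_ifs with h
    · rw [coeff_monomial, if_neg hbd]
    · rw [coeff_zero]
  · intro hd
    rw [notMem_support_iff] at hd
    rw [hd]
    simp

/-- `f` does not involve the variable `w`. -/
def FreeAt (w : Fin n ⊕ Fin n) (f : MvPolynomial (Fin n ⊕ Fin n) K) : Prop :=
  ∀ d, coeff d f ≠ 0 → d w = 0

lemma freeAt_kil_of_mem {Z : Finset (Fin n ⊕ Fin n)} {w} (hw : w ∈ Z)
    (f : MvPolynomial (Fin n ⊕ Fin n) K) : FreeAt w (kil Z f) := by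
  intro d hd
  rw [coeff_kil] at hd
  split_ifs at hd with h
  · exact h w hw
  · exact absurd rfl hd

lemma FreeAt.kil {w} {f : MvPolynomial (Fin n ⊕ Fin n) K} (hf : FreeAt w f)
    (Z : Finset (Fin n ⊕ Fin n)) : FreeAt w (NCC.kil Z f) := by
  intro d hd
  rw [coeff_kil] at hd
  apply hf
  split_ifs at hd with h
  · exact hd
  · exact absurd rfl hd

lemma kil_eq_self {Z : Finset (Fin n ⊕ Fin n)} {f : MvPolynomial (Fin n ⊕ Fin n) K}
    (h : ∀ w ∈ Z, FreeAt w f) : kil Z f = f := by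
  ext d
  rw [coeff_kil]
  split_ifs with hd
  · rfl
  · push_neg at hd
    obtain ⟨w, hwZ, hdw⟩ := hd
    by_contra hc
    exact hdw (h w hwZ d fun h0 => hc h0.symm)

lemma X_dvd_monomial {m : (Fin n ⊕ Fin n) →₀ ℕ} {w} (h : m w ≠ 0) (c : K) :
    (X w : MvPolynomial (Fin n ⊕ Fin n) K) ∣ monomial m c := by
  have hm : (Finsupp.single w 1 + (m - Finsupp.single w 1)) = m := by
    ext a
    rcases eq_or_ne a w with rfl | haw
    · simp only [Finsupp.add_apply, Finsupp.tsub_apply, Finsupp.single_eq_same]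
      omega
    · simp only [Finsupp.add_apply, Finsupp.tsub_apply,
        Finsupp.single_eq_of_ne' (fun h' => haw h'.symm)]
      omega
  exact ⟨monomial (m - Finsupp.single w 1) c, by rw [X, monomial_mul, one_mul, hm]⟩

lemma X_dvd_sub_kil (w : Fin n ⊕ Fin n) (f : MvPolynomial (Fin n ⊕ Fin n) K) :
    (X w : MvPolynomial (Fin n ⊕ Fin n) K) ∣ f - kil {w} f := by
  induction f using MvPolynomial.induction_on' with
  | monomial m c =>
    rw [kil_monomial]
    split_ifs with h
    · simp
    · push_neg at h
      obtain ⟨w', hw', hmw⟩ := h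
      rw [Finset.mem_singleton] at hw'
      subst hw'
      rw [sub_zero]
      exact X_dvd_monomial hmw c
  | add p q hp hq =>
    rw [map_add]
    have h2 : p + q - (kil {w} p + kil {w} q) = (p - kil {w} p) + (q - kil {w} q) := by ring
    rw [h2]
    exact dvd_add hp hq

lemma sub_kil_mem_span (Z : Finset (Fin n ⊕ Fin n)) (f : MvPolynomial (Fin n ⊕ Fin n) K) :
    f - kil Z f ∈ Ideal.span ((fun d => (X d : MvPolynomial (Fin n ⊕ Fin n) K)) '' ↑Z) := by
  induction f using MvPolynomial.induction_on' with
  | monomial m c =>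
    rw [kil_monomial]
    split_ifs with h
    · simp
    · push_neg at h
      obtain ⟨w, hwZ, hmw⟩ := h
      rw [sub_zero]
      obtain ⟨t, ht⟩ := X_dvd_monomial hmw c
      rw [ht]
      exact Ideal.mul_mem_right _ _ (Ideal.subset_span ⟨w, hwZ, rfl⟩)
  | add p q hp hq =>
    rw [map_add]
    have h2 : p + q - (kil Z p + kil Z q) = (p - kil Z p) + (q - kil Z q) := by ring
    rw [h2]
    exact Ideal.add_mem _ hp hq

lemma sep {u : Fin n ⊕ Fin n} {A B : MvPolynomial (Fin n ⊕ Fin n) K}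
    (hA : FreeAt u A) (h : A + X u * B = 0) : A = 0 ∧ B = 0 := by
  classical
  have hA0 : A = 0 := by
    ext d
    rw [coeff_zero]
    by_cases hdu : d u = 0
    · have h2 := congrArg (coeff d) h
      rw [coeff_add, coeff_zero, coeff_X_mul',
        if_neg (fun hs => (Finsupp.mem_support_iff.mp hs) hdu), add_zero] at h2
      exact h2
    · by_contra hc
      exact hdu (hA d hc)
  refine ⟨hA0, ?_⟩
  rw [hA0, zero_add] at h
  rcases mul_eq_zero.mp h with h' | h'
  · exact absurd h' (X_ne_zero u)
  · exact h'

/-- The set of variables killed in the conormal configuration `(P, T, D)`. -/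
def Zset (P T : Finset (Fin n)) (D : Finset (Fin n ⊕ Fin n)) : Finset (Fin n ⊕ Fin n) :=
  T.image Sum.inl ∪ ((P \ T).image Sum.inr ∪ D)

lemma mem_Zset_inl {P T : Finset (Fin n)} {D} {i : Fin n} :
    Sum.inl i ∈ Zset P T D ↔ i ∈ T ∨ Sum.inl i ∈ D := by
  simp [Zset]

lemma mem_Zset_inr {P T : Finset (Fin n)} {D} {i : Fin n} :
    Sum.inr i ∈ Zset P T D ↔ (i ∈ P ∧ i ∉ T) ∨ Sum.inr i ∈ D := by
  simp [Zset]

noncomputable def pairGen (K : Type*) [Field K] {n : ℕ} (i : Fin n) :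
    MvPolynomial (Fin n ⊕ Fin n) K :=
  X (Sum.inl i) * X (Sum.inr i)

lemma key (P : Finset (Fin n)) (D : Finset (Fin n ⊕ Fin n))
    (hD : ∀ i ∈ P, Sum.inl i ∉ D ∧ Sum.inr i ∉ D)
    (f : MvPolynomial (Fin n ⊕ Fin n) K)
    (hf : ∀ T ⊆ P, kil (Zset P T D) f = 0) :
    f ∈ Ideal.span
      (pairGen K '' ↑P ∪ (fun d => (X d : MvPolynomial (Fin n ⊕ Fin n) K)) '' ↑D) := by
  classical
  induction P using Finset.induction_on generalizing D f with
  | empty =>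
    have h0 := hf ∅ (by simp)
    have hZ : Zset (∅ : Finset (Fin n)) ∅ D = D := by
      ext w; cases w <;> simp [mem_Zset_inl, mem_Zset_inr]
    rw [hZ] at h0
    have h1 := sub_kil_mem_span D f
    rw [h0, sub_zero] at h1
    refine Ideal.span_mono ?_ h1
    simp
  | @insert a P ha IH =>
    obtain ⟨v₀, hv₀⟩ := X_dvd_sub_kil (Sum.inr a) f
    obtain ⟨h, hh⟩ := X_dvd_sub_kil (Sum.inl a) (kil {Sum.inr a} f)
    set c : MvPolynomial (Fin n ⊕ Fin n) K := kil {Sum.inl a} (kil {Sum.inr a} f) with hcdef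
    have hfc : f = c + X (Sum.inl a) * h + X (Sum.inr a) * v₀ := by
      rw [← hh, ← hv₀]; ring
    have hcu : FreeAt (Sum.inl a) c :=
      freeAt_kil_of_mem (Finset.mem_singleton_self (Sum.inl a)) _
    have hcv : FreeAt (Sum.inr a) c :=
      (freeAt_kil_of_mem (Finset.mem_singleton_self (Sum.inr a)) f).kil {Sum.inl a}
    -- Zset rewriting lemmas
    have hZ1 : ∀ T ⊆ P, Zset (insert a P) T D = Zset P T (insert (Sum.inr a) D) := by
      intro T hT
      have haT : a ∉ T := fun hiT => ha (hT hiT)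
      ext w
      rcases w with i | i
      · simp [mem_Zset_inl]
      · rcases eq_or_ne i a with rfl | hia
        · simp [mem_Zset_inr, ha, haT]
        · simp [mem_Zset_inr, hia]
    have hZ2 : ∀ T ⊆ P, Zset (insert a P) (insert a T) D = Zset P T (insert (Sum.inl a) D) := by
      intro T hT
      ext w
      rcases w with i | i
      · rcases eq_or_ne i a with rfl | hia
        · simp [mem_Zset_inl]
        · simp [mem_Zset_inl, hia]
      · rcases eq_or_ne i a with rfl | hia
        · simp [mem_Zset_inr, ha]
        · simp [mem_Zset_inr, hia]
    -- memberships of the two distinguished variables in the killed sets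
    have huZ1 : ∀ T ⊆ P, Sum.inl a ∉ Zset P T (insert (Sum.inr a) D) := by
      intro T hT hmem
      rw [mem_Zset_inl] at hmem
      rcases hmem with h' | h'
      · exact ha (hT h')
      · rcases Finset.mem_insert.mp h' with h'' | h''
        · exact Sum.inl_ne_inr h''
        · exact (hD a (Finset.mem_insert_self a P)).1 h''
    have hvZ1 : ∀ T ⊆ P, Sum.inr a ∈ Zset P T (insert (Sum.inr a) D) := by
      intro T _
      rw [mem_Zset_inr]
      exact Or.inr (Finset.mem_insert_self _ _)
    have huZ2 : ∀ T ⊆ P, Sum.inl a ∈ Zset P T (insert (Sum.inl a) D) := by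
      intro T _
      rw [mem_Zset_inl]
      exact Or.inr (Finset.mem_insert_self _ _)
    have hvZ2 : ∀ T ⊆ P, Sum.inr a ∉ Zset P T (insert (Sum.inl a) D) := by
      intro T hT hmem
      rw [mem_Zset_inr] at hmem
      rcases hmem with h' | h'
      · exact ha h'.1
      · rcases Finset.mem_insert.mp h' with h'' | h''
        · exact Sum.inr_ne_inl h''
        · exact (hD a (Finset.mem_insert_self a P)).2 h''
    -- derive the vanishing conditions for c, h, v₀
    have hch : ∀ T ⊆ P, kil (Zset P T (insert (Sum.inr a) D)) c = 0 ∧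
        kil (Zset P T (insert (Sum.inr a) D)) h = 0 := by
      intro T hT
      have h0 := hf T (hT.trans (Finset.subset_insert a P))
      rw [hZ1 T hT] at h0
      have hexp : kil (Zset P T (insert (Sum.inr a) D)) c +
          X (Sum.inl a) * kil (Zset P T (insert (Sum.inr a) D)) h = 0 := by
        have h1 := congrArg (kil (K := K) (Zset P T (insert (Sum.inr a) D))) hfc
        rw [h0, map_add, map_add, map_mul, map_mul, kil_X, kil_X,
          if_neg (huZ1 T hT), if_pos (hvZ1 T hT), zero_mul, add_zero] at h1
        exact h1.symm
      exact sep (hcu.kil _) hexp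
    have hv₀T : ∀ T ⊆ P, kil (Zset P T (insert (Sum.inl a) D)) v₀ = 0 := by
      intro T hT
      have h0 := hf (insert a T) (Finset.insert_subset_insert a hT)
      rw [hZ2 T hT] at h0
      have hexp : kil (Zset P T (insert (Sum.inl a) D)) c +
          X (Sum.inr a) * kil (Zset P T (insert (Sum.inl a) D)) v₀ = 0 := by
        have h1 := congrArg (kil (K := K) (Zset P T (insert (Sum.inl a) D))) hfc
        rw [h0, map_add, map_add, map_mul, map_mul, kil_X, kil_X,
          if_pos (huZ2 T hT), if_neg (hvZ2 T hT), zero_mul, add_zero] at h1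
        exact h1.symm
      exact (sep (hcv.kil _) hexp).2
    -- conditions for the induction hypothesis
    have hDv : ∀ i ∈ P, Sum.inl i ∉ insert (Sum.inr a) D ∧ Sum.inr i ∉ insert (Sum.inr a) D := by
      intro i hi
      constructor
      · intro hmem
        rcases Finset.mem_insert.mp hmem with h' | h'
        · exact Sum.inl_ne_inr h'
        · exact (hD i (Finset.mem_insert_of_mem hi)).1 h'
      · intro hmem
        rcases Finset.mem_insert.mp hmem with h' | h'
        · exact ha (Sum.inr.inj h' ▸ hi)
        · exact (hD i (Finset.mem_insert_of_mem hi)).2 h'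
    have hDu : ∀ i ∈ P, Sum.inl i ∉ insert (Sum.inl a) D ∧ Sum.inr i ∉ insert (Sum.inl a) D := by
      intro i hi
      constructor
      · intro hmem
        rcases Finset.mem_insert.mp hmem with h' | h'
        · exact ha (Sum.inl.inj h' ▸ hi)
        · exact (hD i (Finset.mem_insert_of_mem hi)).1 h'
      · intro hmem
        rcases Finset.mem_insert.mp hmem with h' | h'
        · exact Sum.inr_ne_inl h'
        · exact (hD i (Finset.mem_insert_of_mem hi)).2 h'
    have hcJ := IH (insert (Sum.inr a) D) hDv c (fun T hT => (hch T hT).1)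
    have hhJ := IH (insert (Sum.inr a) D) hDv h (fun T hT => (hch T hT).2)
    have hv₀J := IH (insert (Sum.inl a) D) hDu v₀ hv₀T
    set I := Ideal.span
      (pairGen K '' ↑(insert a P) ∪ (fun d => (X d : MvPolynomial (Fin n ⊕ Fin n) K)) '' ↑D)
      with hI
    -- generators belong to I
    have hgenP : ∀ i ∈ P, pairGen K i ∈ I := fun i hi =>
      Ideal.subset_span (Or.inl ⟨i, Finset.mem_insert_of_mem hi, rfl⟩)
    have hgenD : ∀ d ∈ D, (X d : MvPolynomial (Fin n ⊕ Fin n) K) ∈ I := fun d hd =>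
      Ideal.subset_span (Or.inr ⟨d, hd, rfl⟩)
    have hgena : pairGen K a ∈ I :=
      Ideal.subset_span (Or.inl ⟨a, Finset.mem_insert_self a P, rfl⟩)
    have hpa : pairGen K a = X (Sum.inl a) * X (Sum.inr a) := rfl
    -- c ∈ I
    have hcI : c ∈ I := by
      have hself : kil {Sum.inr a} c = c := kil_eq_self (by
        intro w hw
        rw [Finset.mem_singleton] at hw
        subst hw
        exact hcv)
      rw [← hself]
      have hmap : kil (K := K) {Sum.inr a} c ∈
          Ideal.map (kil (K := K) {Sum.inr a}).toRingHom
          (Ideal.span (pairGen K '' ↑P ∪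
            (fun d => (X d : MvPolynomial (Fin n ⊕ Fin n) K)) '' ↑(insert (Sum.inr a) D))) :=
        Ideal.mem_map_of_mem _ hcJ
      rw [Ideal.map_span] at hmap
      refine Ideal.span_le.mpr ?_ hmap
      rintro q ⟨g, hg, rfl⟩
      rcases hg with ⟨i, hi, rfl⟩ | ⟨d, hd, rfl⟩
      · have heq : (kil (K := K) {Sum.inr a}).toRingHom (pairGen K i) = pairGen K i := by
          show kil (K := K) {Sum.inr a} (X (Sum.inl i) * X (Sum.inr i)) = _
          rw [map_mul, kil_X, kil_X, if_neg, if_neg]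
          · rfl
          · rw [Finset.mem_singleton]
            exact fun h' => ha (Sum.inr.inj h' ▸ hi)
          · rw [Finset.mem_singleton]
            exact fun h' => Sum.inl_ne_inr h'
        rw [heq]
        exact SetLike.mem_coe.mpr (hgenP i hi)
      · rcases Finset.mem_insert.mp hd with rfl | hd'
        · have heq : (kil (K := K) {Sum.inr a}).toRingHom (X (Sum.inr a)) = 0 := by
            show kil (K := K) {Sum.inr a} (X (Sum.inr a)) = 0
            rw [kil_X, if_pos (Finset.mem_singleton_self _)]
          rw [heq]
          exact SetLike.mem_coe.mpr (Ideal.zero_mem I)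
        · have heq : (kil (K := K) {Sum.inr a}).toRingHom (X d) = X d := by
            show kil (K := K) {Sum.inr a} (X d) = X d
            rw [kil_X, if_neg]
            rw [Finset.mem_singleton]
            exact fun h' => (hD a (Finset.mem_insert_self a P)).2 (h' ▸ hd')
          rw [heq]
          exact SetLike.mem_coe.mpr (hgenD d hd')
    -- X (inl a) * h ∈ I
    have hXuh : X (Sum.inl a) * h ∈ I := by
      refine Submodule.span_induction (p := fun x _ => X (Sum.inl a) * x ∈ I) ?_ ?_ ?_ ?_ hhJ
      · rintro x (⟨i, hi, rfl⟩ | ⟨d, hd, rfl⟩)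
        · exact Ideal.mul_mem_left _ _ (hgenP i hi)
        · rcases Finset.mem_insert.mp hd with rfl | hd'
          · show X (Sum.inl a) * X (Sum.inr a) ∈ I
            rw [← hpa]; exact hgena
          · exact Ideal.mul_mem_left _ _ (hgenD d hd')
      · show X (Sum.inl a) * (0 : MvPolynomial (Fin n ⊕ Fin n) K) ∈ I
        rw [mul_zero]; exact Ideal.zero_mem I
      · intro x y _ _ hx hy
        show X (Sum.inl a) * (x + y) ∈ I
        rw [mul_add]; exact Ideal.add_mem _ hx hy
      · intro r x _ hx
        show X (Sum.inl a) * (r • x) ∈ I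
        rw [smul_eq_mul, mul_left_comm]
        exact Ideal.mul_mem_left _ _ hx
    -- X (inr a) * v₀ ∈ I
    have hXvv : X (Sum.inr a) * v₀ ∈ I := by
      refine Submodule.span_induction (p := fun x _ => X (Sum.inr a) * x ∈ I) ?_ ?_ ?_ ?_ hv₀J
      · rintro x (⟨i, hi, rfl⟩ | ⟨d, hd, rfl⟩)
        · exact Ideal.mul_mem_left _ _ (hgenP i hi)
        · rcases Finset.mem_insert.mp hd with rfl | hd'
          · show X (Sum.inr a) * X (Sum.inl a) ∈ I
            rw [show (X (Sum.inr a) * X (Sum.inl a) : MvPolynomial (Fin n ⊕ Fin n) K)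
              = pairGen K a from (mul_comm _ _).trans hpa.symm]
            exact hgena
          · exact Ideal.mul_mem_left _ _ (hgenD d hd')
      · show X (Sum.inr a) * (0 : MvPolynomial (Fin n ⊕ Fin n) K) ∈ I
        rw [mul_zero]; exact Ideal.zero_mem I
      · intro x y _ _ hx hy
        show X (Sum.inr a) * (x + y) ∈ I
        rw [mul_add]; exact Ideal.add_mem _ hx hy
      · intro r x _ hx
        show X (Sum.inr a) * (r • x) ∈ I
        rw [smul_eq_mul, mul_left_comm]
        exact Ideal.mul_mem_left _ _ hx
    rw [hfc]
    exact Ideal.add_mem _ (Ideal.add_mem _ hcI hXuh) hXvv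

end NCC

/-- The ideal `(x_1ξ_1, …, x_rξ_r, ξ_{r+1}, …, ξ_n)` in `K[x_1,…,x_n,ξ_1,…,ξ_n]`
(with `x_i = X (inl i)`, `ξ_i = X (inr i)`) is a radical ideal, and its zero set is the
union, over subsets `S ⊆ {1,…,r}`, of the conormal varieties to the coordinate subspaces
`{x_i = 0, i ∈ S}`, i.e. the linear subspaces `{x_i = 0 (i ∈ S), ξ_j = 0 (j ∉ S)}`. -/
theorem normal_crossing_conormal_ideal_radical_and_zero_set
    (K : Type*) [Field K] (n r : ℕ) (hr : r ≤ n) :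
    (Ideal.span
        ({p | ∃ i : Fin n, (i : ℕ) < r ∧ p = X (Sum.inl i) * X (Sum.inr i)} ∪
          {p | ∃ i : Fin n, r ≤ (i : ℕ) ∧ p = X (Sum.inr i)} :
          Set (MvPolynomial (Fin n ⊕ Fin n) K))).IsRadical ∧
    (∀ p : (Fin n ⊕ Fin n) → K,
      (∀ f ∈ (Ideal.span
          ({q | ∃ i : Fin n, (i : ℕ) < r ∧ q = X (Sum.inl i) * X (Sum.inr i)} ∪
            {q | ∃ i : Fin n, r ≤ (i : ℕ) ∧ q = X (Sum.inr i)} :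
            Set (MvPolynomial (Fin n ⊕ Fin n) K))), eval p f = 0) ↔
        ∃ S : Finset (Fin n), (∀ i ∈ S, (i : ℕ) < r) ∧
          (∀ i ∈ S, p (Sum.inl i) = 0) ∧ (∀ j : Fin n, j ∉ S → p (Sum.inr j) = 0)) := by
  classical
  set G : Set (MvPolynomial (Fin n ⊕ Fin n) K) :=
    ({p | ∃ i : Fin n, (i : ℕ) < r ∧ p = X (Sum.inl i) * X (Sum.inr i)} ∪
      {p | ∃ i : Fin n, r ≤ (i : ℕ) ∧ p = X (Sum.inr i)}) with hG
  set pairs : Finset (Fin n) := Finset.univ.filter (fun i : Fin n => (i : ℕ) < r) with hpairs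
  set D : Finset (Fin n ⊕ Fin n) :=
    (Finset.univ.filter (fun i : Fin n => r ≤ (i : ℕ))).image Sum.inr with hDdef
  have hGset : G = NCC.pairGen K '' ↑pairs ∪
      (fun d => (X d : MvPolynomial (Fin n ⊕ Fin n) K)) '' ↑D := by
    rw [hG]
    ext q
    simp only [Set.mem_union, Set.mem_setOf_eq, Set.mem_image, Finset.coe_filter,
      Finset.mem_coe, Finset.coe_image, Set.mem_image, Set.mem_setOf_eq, hpairs, hDdef,
      Finset.mem_univ, true_and, NCC.pairGen, Finset.mem_filter, Finset.mem_image]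
    constructor
    · rintro (⟨i, hir, rfl⟩ | ⟨i, hir, rfl⟩)
      · exact Or.inl ⟨i, hir, rfl⟩
      · exact Or.inr ⟨Sum.inr i, ⟨i, hir, rfl⟩, rfl⟩
    · rintro (⟨i, hir, rfl⟩ | ⟨d, ⟨i, hir, rfl⟩, rfl⟩)
      · exact Or.inl ⟨i, hir, rfl⟩
      · exact Or.inr ⟨i, hir, rfl⟩
  have hDcond : ∀ i ∈ pairs, Sum.inl i ∉ D ∧ Sum.inr i ∉ D := by
    intro i hi
    rw [hpairs, Finset.mem_filter] at hi
    constructor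
    · intro hmem
      rw [hDdef, Finset.mem_image] at hmem
      obtain ⟨j, _, hj⟩ := hmem
      exact Sum.inr_ne_inl hj
    · intro hmem
      rw [hDdef, Finset.mem_image] at hmem
      obtain ⟨j, hj1, hj2⟩ := hmem
      rw [Finset.mem_filter] at hj1
      rw [Sum.inr.injEq] at hj2
      subst hj2
      omega
  have hforward : ∀ T ⊆ pairs, ∀ f ∈ Ideal.span G,
      NCC.kil (NCC.Zset pairs T D) f = 0 := by
    intro T hT f hf
    have hle : Ideal.span G ≤ RingHom.ker (NCC.kil (K := K) (NCC.Zset pairs T D)).toRingHom := by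
      rw [Ideal.span_le, hG]
      rintro q (⟨i, hir, rfl⟩ | ⟨i, hir, rfl⟩)
      · rw [SetLike.mem_coe, RingHom.mem_ker]
        show NCC.kil (NCC.Zset pairs T D) (X (Sum.inl i) * X (Sum.inr i)) = 0
        rw [map_mul, NCC.kil_X, NCC.kil_X]
        by_cases hiT : i ∈ T
        · rw [if_pos (NCC.mem_Zset_inl.mpr (Or.inl hiT)), zero_mul]
        · rw [if_pos (NCC.mem_Zset_inr.mpr (Or.inl
            ⟨by rw [hpairs, Finset.mem_filter]; exact ⟨Finset.mem_univ i, hir⟩, hiT⟩)), mul_zero]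
      · rw [SetLike.mem_coe, RingHom.mem_ker]
        show NCC.kil (NCC.Zset pairs T D) (X (Sum.inr i)) = 0
        rw [NCC.kil_X, if_pos]
        apply NCC.mem_Zset_inr.mpr
        refine Or.inr ?_
        rw [hDdef, Finset.mem_image]
        exact ⟨i, by rw [Finset.mem_filter]; exact ⟨Finset.mem_univ i, hir⟩, rfl⟩
    exact RingHom.mem_ker.mp (hle hf)
  constructor
  · -- radicality
    intro f hf
    obtain ⟨k, hk⟩ := Ideal.mem_radical_iff.mp hf
    rcases Nat.eq_zero_or_pos k with rfl | hkpos
    · rw [pow_zero] at hk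
      have h1 := Ideal.mul_mem_left _ f hk
      rwa [mul_one] at h1
    · rw [hGset]
      apply NCC.key pairs D hDcond
      intro T hT
      have h0 := hforward T hT _ hk
      rw [map_pow] at h0
      exact (pow_eq_zero_iff hkpos.ne').mp h0
  · -- zero set
    intro p
    constructor
    · intro hvan
      refine ⟨Finset.univ.filter (fun i : Fin n => (i : ℕ) < r ∧ p (Sum.inl i) = 0),
        ?_, ?_, ?_⟩
      · intro i hi
        exact ((Finset.mem_filter.mp hi).2).1
      · intro i hi
        exact ((Finset.mem_filter.mp hi).2).2
      · intro j hj
        simp only [Finset.mem_filter, Finset.mem_univ, true_and, not_and] at hj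
        by_cases hjr : (j : ℕ) < r
        · have hgen : (X (Sum.inl j) * X (Sum.inr j) : MvPolynomial (Fin n ⊕ Fin n) K)
              ∈ Ideal.span G := Ideal.subset_span (Or.inl ⟨j, hjr, rfl⟩)
          have h1 := hvan _ hgen
          rw [map_mul, eval_X, eval_X] at h1
          rcases mul_eq_zero.mp h1 with h' | h'
          · exact absurd h' (hj hjr)
          · exact h'
        · have hgen : (X (Sum.inr j) : MvPolynomial (Fin n ⊕ Fin n) K) ∈ Ideal.span G :=
            Ideal.subset_span (Or.inr ⟨j, le_of_not_gt hjr, rfl⟩)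
          have h1 := hvan _ hgen
          rwa [eval_X] at h1
    · rintro ⟨S, hS1, hS2, hS3⟩ f hf
      have hle : Ideal.span G ≤ RingHom.ker (eval p) := by
        rw [Ideal.span_le, hG]
        rintro q (⟨i, hir, rfl⟩ | ⟨i, hir, rfl⟩)
        · rw [SetLike.mem_coe, RingHom.mem_ker, map_mul, eval_X, eval_X]
          by_cases hiS : i ∈ S
          · rw [hS2 i hiS, zero_mul]
          · rw [hS3 i hiS, mul_zero]
        · rw [SetLike.mem_coe, RingHom.mem_ker, eval_X]
          exact hS3 i (fun hiS => absurd (hS1 i hiS) (not_lt.mpr hir))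
      exact RingHom.mem_ker.mp (hle hf)
end

section
/- Let K have characteristic 0, let D be the Weyl algebra in one variable, P a monic operator of order n, M = D/DP, and u the class of 1. Define F_0(M) to be the K[x]-submodule generated by u, (x∂)u, …, (x∂)^{n−1}u and F_k(M) = F_k(D)·F_0(M). Then x∂ annihilates Gr_F(M) (equivalently x∂·F_k(M) ⊆ F_k(M) for all k) if and only if, writing P = ∑ a_i(x)(x∂)^i with a_n = 1, all coefficients a_i(x) lie in K[x] localized away from 0 with no pole at 0. -/
/-- A rational function is regular at `0` (no pole at `0`). -/
def RegAt0 {K : Type*} [Field K] (f : RatFunc K) : Prop :=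
  ∃ p q : Polynomial K, q.eval 0 ≠ 0 ∧
    f * algebraMap (Polynomial K) (RatFunc K) q = algebraMap (Polynomial K) (RatFunc K) p

namespace KRF

variable {K : Type*} [Field K]

lemma reg_poly (p : Polynomial K) : RegAt0 (algebraMap (Polynomial K) (RatFunc K) p) :=
  ⟨p, 1, by simp, by simp⟩

lemma reg_zero : RegAt0 (0 : RatFunc K) := ⟨0, 1, by simp, by simp⟩

lemma reg_one : RegAt0 (1 : RatFunc K) := by simpa using reg_poly (K := K) 1

lemma reg_X : RegAt0 (RatFunc.X : RatFunc K) := by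
  simpa [RatFunc.algebraMap_X] using reg_poly (Polynomial.X)

lemma reg_add {f g : RatFunc K} (hf : RegAt0 f) (hg : RegAt0 g) : RegAt0 (f + g) := by
  obtain ⟨p₁, q₁, hq₁, h₁⟩ := hf
  obtain ⟨p₂, q₂, hq₂, h₂⟩ := hg
  refine ⟨p₁ * q₂ + p₂ * q₁, q₁ * q₂, by simp [hq₁, hq₂], ?_⟩
  simp only [map_add, map_mul]
  linear_combination (algebraMap (Polynomial K) (RatFunc K) q₂) * h₁ +
    (algebraMap (Polynomial K) (RatFunc K) q₁) * h₂

lemma reg_neg {f : RatFunc K} (hf : RegAt0 f) : RegAt0 (-f) := by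
  obtain ⟨p₁, q₁, hq₁, h₁⟩ := hf
  exact ⟨-p₁, q₁, hq₁, by simp only [map_neg]; linear_combination -h₁⟩

lemma reg_mul {f g : RatFunc K} (hf : RegAt0 f) (hg : RegAt0 g) : RegAt0 (f * g) := by
  obtain ⟨p₁, q₁, hq₁, h₁⟩ := hf
  obtain ⟨p₂, q₂, hq₂, h₂⟩ := hg
  refine ⟨p₁ * p₂, q₁ * q₂, by simp [hq₁, hq₂], ?_⟩
  simp only [map_mul]
  linear_combination (g * algebraMap (Polynomial K) (RatFunc K) q₂) * h₁ +
    (algebraMap (Polynomial K) (RatFunc K) p₁) * h₂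

section der

variable (derR : RatFunc K →ₗ[K] RatFunc K)
  (hderX : derR RatFunc.X = 1)
  (hderLeib : ∀ f g : RatFunc K, derR (f * g) = f * derR g + g * derR f)

include hderLeib

lemma derR_one : derR 1 = 0 := by
  have h := hderLeib 1 1
  rw [mul_one, one_mul] at h
  exact (right_eq_add.mp h)

lemma derR_C (c : K) : derR (RatFunc.C c) = 0 := by
  have : (RatFunc.C c : RatFunc K) = c • 1 := by
    rw [RatFunc.smul_eq_C_mul, mul_one]
  rw [this, map_smul, derR_one derR hderLeib, smul_zero]

include hderX

lemma derR_X_pow : ∀ k : ℕ, derR (RatFunc.X ^ (k+1)) = (k+1 : RatFunc K) * RatFunc.X ^ k := by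
  intro k
  induction k with
  | zero => simpa using hderX
  | succ j ih =>
    have h := hderLeib RatFunc.X (RatFunc.X ^ (j+1))
    rw [← pow_succ'] at h
    rw [h, ih, hderX]
    push_cast
    ring

lemma derR_algebraMap (p : Polynomial K) :
    derR (algebraMap (Polynomial K) (RatFunc K) p) =
      algebraMap (Polynomial K) (RatFunc K) (Polynomial.derivative p) := by
  induction p using Polynomial.induction_on' with
  | add p q hp hq => rw [map_add, map_add, hp, hq, map_add, map_add]
  | monomial k c =>
    rw [← Polynomial.C_mul_X_pow_eq_monomial, Polynomial.derivative_C_mul_X_pow]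
    rw [map_mul, map_pow, RatFunc.algebraMap_C, RatFunc.algebraMap_X]
    rw [hderLeib]
    rw [derR_C derR hderLeib, mul_zero, add_zero]
    cases k with
    | zero =>
      simp [derR_one derR hderLeib]
    | succ j =>
      rw [derR_X_pow derR hderX hderLeib]
      rw [map_mul, map_pow, RatFunc.algebraMap_C, RatFunc.algebraMap_X]
      rw [Nat.add_sub_cancel, map_mul, map_natCast]
      push_cast
      ring

omit hderX in
lemma reg_der {f : RatFunc K} (hf : RegAt0 f)
    (dalg : ∀ p : Polynomial K, derR (algebraMap (Polynomial K) (RatFunc K) p) =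
      algebraMap (Polynomial K) (RatFunc K) (Polynomial.derivative p)) :
    RegAt0 (derR f) := by
  obtain ⟨p, q, hq, h⟩ := hf
  refine ⟨Polynomial.derivative p * q - p * Polynomial.derivative q, q * q,
    by simp [hq], ?_⟩
  have h1 : derR (f * algebraMap (Polynomial K) (RatFunc K) q) =
      derR (algebraMap (Polynomial K) (RatFunc K) p) := by rw [h]
  rw [hderLeib, dalg, dalg] at h1
  simp only [map_mul, map_sub]
  linear_combination (algebraMap (Polynomial K) (RatFunc K) q) * h1 -
    (algebraMap (Polynomial K) (RatFunc K) (Polynomial.derivative q)) * h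

end der

section Dside

variable {D : Type*} [Ring D] [Algebra K D]
  (φ : RatFunc K →ₐ[K] D) (derR : RatFunc K →ₗ[K] RatFunc K) (d : D)
  (hd : ∀ f : RatFunc K, d * φ f = φ f * d + φ (derR f))
  (hderX : derR RatFunc.X = 1)

include hd in
lemma theta_phi (f : RatFunc K) :
    (φ RatFunc.X * d) * φ f = φ f * (φ RatFunc.X * d) + φ (RatFunc.X * derR f) := by
  have hc : φ RatFunc.X * φ f = φ f * φ RatFunc.X := by
    rw [← map_mul, ← map_mul, mul_comm]
  rw [mul_assoc, hd, mul_add, ← mul_assoc, hc, mul_assoc, ← map_mul]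

include hd hderX in
lemma theta_dpow : ∀ j : ℕ,
    (φ RatFunc.X * d) * d ^ j = d ^ j * (φ RatFunc.X * d) - j • d ^ j := by
  have hdθ : d * (φ RatFunc.X * d) = (φ RatFunc.X * d) * d + d := by
    rw [← mul_assoc, hd, hderX, map_one, add_mul, one_mul]
  intro j
  induction j with
  | zero => simp
  | succ j ih =>
    have h2 : (φ RatFunc.X * d) * d = d * (φ RatFunc.X * d) - d :=
      eq_sub_of_add_eq hdθ.symm
    rw [pow_succ, ← mul_assoc, ih, sub_mul, smul_mul_assoc, mul_assoc, h2, mul_sub,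
      succ_nsmul, ← mul_assoc]
    abel

end Dside

end KRF

/-- Kashiwara regularity versus Fuchs regularity for `M = D/DP` in one variable.

`D` is a ring of differential operators in one variable: it receives the rational
functions via `φ`, and contains a derivation element `∂` with `∂·f = f·∂ + f'`.
`P = ∑_{i≤n} a_i(x) (x∂)^i` is monic (`a_n = 1`), `M = D/DP`, `u` the class of `1`,
`F₀(M)` the `K[x]`-module generated by `u, (x∂)u, …, (x∂)^{n-1}u`, and
`F_k(M) = F_k(D)·F₀(M)` where `F_k(D)` consists of operators of order `≤ k` with
coefficients regular at `0`.  Assuming `u, (x∂)u, …, (x∂)^{n-1}u` are linearly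
independent over the rational functions, the symbol `x∂` annihilates `Gr_F M`
(equivalently `x∂ · F_k(M) ⊆ F_k(M)` for all `k`) if and only if all the coefficients
`a_i` are regular at `0`. -/
theorem kashiwara_regular_iff_fuchs_one_variable
    (K : Type*) [Field K] [CharZero K]
    (D : Type*) [Ring D] [Algebra K D]
    (φ : RatFunc K →ₐ[K] D)
    (derR : RatFunc K →ₗ[K] RatFunc K)
    (hderX : derR RatFunc.X = 1)
    (hderLeib : ∀ f g : RatFunc K, derR (f * g) = f * derR g + g * derR f)
    (d : D) (hd : ∀ f : RatFunc K, d * φ f = φ f * d + φ (derR f))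
    (n : ℕ) (hn : 1 ≤ n) (a : ℕ → RatFunc K) (han : a n = 1)
    (P : D) (hP : P = ∑ i ∈ Finset.range (n + 1), φ (a i) * (φ RatFunc.X * d) ^ i)
    (M : Type*) [AddCommGroup M] [Module D M]
    (q : D →ₗ[D] M) (hq : Function.Surjective q)
    (hker : LinearMap.ker q = Submodule.span D {P})
    (u : M) (hu : u = q 1)
    (hindep : ∀ c : Fin n → RatFunc K,
      ∑ i : Fin n, (φ (c i) * (φ RatFunc.X * d) ^ (i : ℕ)) • u = 0 → ∀ i, c i = 0)
    (F₀ : AddSubgroup M)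
    (hF₀ : F₀ = AddSubgroup.closure {m | ∃ (p : Polynomial K) (i : ℕ), i < n ∧
      m = (φ (algebraMap (Polynomial K) (RatFunc K) p) * (φ RatFunc.X * d) ^ i) • u})
    (FD : ℕ → AddSubgroup D)
    (hFD : ∀ k, FD k = AddSubgroup.closure
      {w | ∃ f : RatFunc K, RegAt0 f ∧ ∃ j ≤ k, w = φ f * d ^ j})
    (FM : ℕ → AddSubgroup M)
    (hFM : ∀ k, FM k = AddSubgroup.closure {m | ∃ w ∈ FD k, ∃ v ∈ F₀, m = w • v}) :
    (∀ k : ℕ, ∀ m ∈ FM k, (φ RatFunc.X * d) • m ∈ FM k) ↔ (∀ i ≤ n, RegAt0 (a i)) := by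
  classical
  set θ : D := φ RatFunc.X * d with hθdef
  have dalg : ∀ p : Polynomial K, derR (algebraMap (Polynomial K) (RatFunc K) p) =
      algebraMap (Polynomial K) (RatFunc K) (Polynomial.derivative p) :=
    KRF.derR_algebraMap derR hderX hderLeib
  have regder : ∀ {f : RatFunc K}, RegAt0 f → RegAt0 (derR f) :=
    fun hf => KRF.reg_der derR hderLeib hf dalg
  have tφ : ∀ f, θ * φ f = φ f * θ + φ (RatFunc.X * derR f) := KRF.theta_phi φ derR d hd
  have tdp : ∀ j : ℕ, θ * d ^ j = d ^ j * θ - j • d ^ j := KRF.theta_dpow φ derR d hd hderX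
  -- the fundamental relation
  have hPu : P • u = 0 := by
    have hmem : P ∈ LinearMap.ker q := by
      rw [hker]; exact Submodule.mem_span_singleton_self P
    calc P • u = P • q 1 := by rw [hu]
      _ = q (P • 1) := (map_smul q P 1).symm
      _ = q P := by rw [smul_eq_mul, mul_one]
      _ = 0 := hmem
  have hrel : (θ ^ n) • u = -∑ i ∈ Finset.range n, (φ (a i) * θ ^ i) • u := by
    have h1 : ∑ i ∈ Finset.range (n+1), (φ (a i) * θ ^ i) • u = 0 := by
      have h := hPu
      rw [hP, Finset.sum_smul] at h
      exact h
    rw [Finset.sum_range_succ, han, map_one, one_mul] at h1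
    exact eq_neg_of_add_eq_zero_right h1
  -- basic membership facts
  have memFM0 : ∀ c : RatFunc K, RegAt0 c → ∀ i : ℕ, i < n → (φ c * θ ^ i) • u ∈ FM 0 := by
    intro c hc i hi
    rw [hFM]
    apply AddSubgroup.subset_closure
    refine ⟨φ c, ?_, (θ ^ i) • u, ?_, by rw [smul_smul]⟩
    · rw [hFD]
      exact AddSubgroup.subset_closure ⟨c, hc, 0, le_rfl, by rw [pow_zero, mul_one]⟩
    · rw [hF₀]
      exact AddSubgroup.subset_closure ⟨1, i, hi, by rw [map_one, map_one, one_mul]⟩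
  have hF₀FM0 : ∀ v ∈ F₀, v ∈ FM 0 := by
    intro v hv
    rw [hF₀] at hv
    refine AddSubgroup.closure_induction (p := fun m _ => m ∈ FM 0) (fun m hm => ?_)
      (zero_mem _) (fun x y _ _ hx hy => add_mem hx hy) (fun x _ hx => neg_mem hx) hv
    obtain ⟨p, i, hi, rfl⟩ := hm
    exact memFM0 _ (KRF.reg_poly p) i hi
  have FDmono : ∀ {j k : ℕ}, j ≤ k → ∀ w ∈ FD j, w ∈ FD k := by
    intro j k hjk w hw
    rw [hFD j] at hw
    refine AddSubgroup.closure_induction (p := fun w _ => w ∈ FD k) (fun x hx => ?_)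
      (zero_mem _) (fun x y _ _ hx hy => add_mem hx hy) (fun x _ hx => neg_mem hx) hw
    obtain ⟨f, hf, j', hj', rfl⟩ := hx
    rw [hFD k]
    exact AddSubgroup.subset_closure ⟨f, hf, j', hj'.trans hjk, rfl⟩
  have dFD : ∀ k : ℕ, ∀ w ∈ FD k, d * w ∈ FD (k+1) := by
    intro k w hw
    rw [hFD k] at hw
    refine AddSubgroup.closure_induction (p := fun w _ => d * w ∈ FD (k+1)) (fun x hx => ?_)
      (by beta_reduce; rw [mul_zero]; exact zero_mem _)
      (fun x y _ _ hx hy => by beta_reduce; rw [mul_add]; exact add_mem hx hy)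
      (fun x _ hx => by beta_reduce; rw [mul_neg]; exact neg_mem hx) hw
    obtain ⟨f, hf, j, hj, rfl⟩ := hx
    have hexp : d * (φ f * d ^ j) = φ f * d ^ (j+1) + φ (derR f) * d ^ j := by
      rw [← mul_assoc, hd, add_mul, mul_assoc, ← pow_succ']
    rw [hexp, hFD (k+1)]
    exact add_mem
      (AddSubgroup.subset_closure ⟨f, hf, j+1, by omega, rfl⟩)
      (AddSubgroup.subset_closure ⟨derR f, regder hf, j, by omega, rfl⟩)
  have dpowφ : ∀ j : ℕ, ∀ g : RatFunc K, RegAt0 g → d ^ j * φ g ∈ FD j := by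
    intro j
    induction j with
    | zero =>
      intro g hg
      rw [pow_zero, one_mul, hFD 0]
      exact AddSubgroup.subset_closure ⟨g, hg, 0, le_rfl, by rw [pow_zero, mul_one]⟩
    | succ j ih =>
      intro g hg
      rw [pow_succ', mul_assoc]
      exact dFD j _ (ih g hg)
  have φFD : ∀ f : RatFunc K, RegAt0 f → ∀ k : ℕ, ∀ w ∈ FD k, φ f * w ∈ FD k := by
    intro f hf k w hw
    rw [hFD k] at hw
    refine AddSubgroup.closure_induction (p := fun w _ => φ f * w ∈ FD k) (fun x hx => ?_)
      (by beta_reduce; rw [mul_zero]; exact zero_mem _)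
      (fun x y _ _ hx hy => by beta_reduce; rw [mul_add]; exact add_mem hx hy)
      (fun x _ hx => by beta_reduce; rw [mul_neg]; exact neg_mem hx) hw
    obtain ⟨g, hg, j, hj, rfl⟩ := hx
    rw [← mul_assoc, ← map_mul, hFD k]
    exact AddSubgroup.subset_closure ⟨f * g, KRF.reg_mul hf hg, j, hj, rfl⟩
  have FDmulφ : ∀ k : ℕ, ∀ w ∈ FD k, ∀ g : RatFunc K, RegAt0 g → w * φ g ∈ FD k := by
    intro k w hw g hg
    rw [hFD k] at hw
    refine AddSubgroup.closure_induction (p := fun w _ => w * φ g ∈ FD k) (fun x hx => ?_)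
      (by beta_reduce; rw [zero_mul]; exact zero_mem _)
      (fun x y _ _ hx hy => by beta_reduce; rw [add_mul]; exact add_mem hx hy)
      (fun x _ hx => by beta_reduce; rw [neg_mul]; exact neg_mem hx) hw
    obtain ⟨f, hf, j, hj, rfl⟩ := hx
    rw [mul_assoc]
    exact FDmono hj _ (φFD f hf j _ (dpowφ j g hg))
  have FD0repr : ∀ w ∈ FD 0, ∃ g : RatFunc K, RegAt0 g ∧ w = φ g := by
    intro w hw
    rw [hFD 0] at hw
    refine AddSubgroup.closure_induction
      (p := fun w _ => ∃ g : RatFunc K, RegAt0 g ∧ w = φ g) (fun x hx => ?_)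
      (⟨0, KRF.reg_zero, (map_zero φ).symm⟩)
      (fun x y _ _ hx hy => ?_) (fun x _ hx => ?_) hw
    · obtain ⟨f, hf, j, hj, rfl⟩ := hx
      refine ⟨f, hf, ?_⟩
      have : j = 0 := Nat.le_zero.mp hj
      rw [this, pow_zero, mul_one]
    · obtain ⟨g1, hg1, rfl⟩ := hx
      obtain ⟨g2, hg2, rfl⟩ := hy
      exact ⟨g1 + g2, KRF.reg_add hg1 hg2, (map_add φ g1 g2).symm⟩
    · obtain ⟨g1, hg1, rfl⟩ := hx
      exact ⟨-g1, KRF.reg_neg hg1, (map_neg φ g1).symm⟩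
  have smulFM : ∀ k : ℕ, ∀ w ∈ FD k, ∀ m ∈ FM 0, w • m ∈ FM k := by
    intro k w hw m hm
    rw [hFM 0] at hm
    refine AddSubgroup.closure_induction (p := fun m _ => w • m ∈ FM k) (fun x hx => ?_)
      (by beta_reduce; rw [smul_zero]; exact zero_mem _)
      (fun x y _ _ hx hy => by beta_reduce; rw [smul_add]; exact add_mem hx hy)
      (fun x _ hx => by beta_reduce; rw [smul_neg]; exact neg_mem hx) hm
    obtain ⟨w', hw', v, hv, rfl⟩ := hx
    obtain ⟨g, hg, rfl⟩ := FD0repr w' hw'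
    rw [smul_smul, hFM k]
    exact AddSubgroup.subset_closure ⟨w * φ g, FDmulφ k w hw g hg, v, hv, rfl⟩
  constructor
  · -- Kashiwara regular → coefficients regular at 0
    intro H i hi
    rcases eq_or_lt_of_le hi with rfl | hilt
    · rw [han]; exact KRF.reg_one
    · -- representation of elements of FM 0
      have FM0repr : ∀ m ∈ FM 0, ∃ c : Fin n → RatFunc K,
          (∀ j, RegAt0 (c j)) ∧ m = ∑ j : Fin n, (φ (c j) * θ ^ (j : ℕ)) • u := by
        intro m hm
        rw [hFM 0] at hm
        refine AddSubgroup.closure_induction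
          (p := fun m _ => ∃ c : Fin n → RatFunc K,
            (∀ j, RegAt0 (c j)) ∧ m = ∑ j : Fin n, (φ (c j) * θ ^ (j : ℕ)) • u)
          (fun x hx => ?_)
          (⟨0, fun j => KRF.reg_zero, by simp⟩)
          (fun x y _ _ hx hy => ?_) (fun x _ hx => ?_) hm
        · obtain ⟨w, hw, v, hv, rfl⟩ := hx
          obtain ⟨g, hg, rfl⟩ := FD0repr w hw
          rw [hF₀] at hv
          refine AddSubgroup.closure_induction
            (p := fun v _ => ∃ c : Fin n → RatFunc K,
              (∀ j, RegAt0 (c j)) ∧ φ g • v = ∑ j : Fin n, (φ (c j) * θ ^ (j : ℕ)) • u)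
            (fun v hv => ?_)
            (⟨0, fun j => KRF.reg_zero, by simp⟩)
            (fun x y _ _ hx hy => ?_) (fun x _ hx => ?_) hv
          · obtain ⟨p, i', hi', rfl⟩ := hv
            refine ⟨fun j => if (j : ℕ) = i'
              then g * algebraMap (Polynomial K) (RatFunc K) p else 0, fun j => ?_, ?_⟩
            · beta_reduce
              by_cases h : (j : ℕ) = i'
              · rw [if_pos h]; exact KRF.reg_mul hg (KRF.reg_poly p)
              · rw [if_neg h]; exact KRF.reg_zero
            · beta_reduce
              rw [Fintype.sum_eq_single (⟨i', hi'⟩ : Fin n)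
                (fun j hj => ?_)]
              · rw [if_pos rfl, smul_smul, ← mul_assoc, ← map_mul]
              · have hne : (j : ℕ) ≠ i' := fun h => hj (Fin.ext h)
                beta_reduce
                rw [if_neg hne, map_zero, zero_mul, zero_smul]
          · obtain ⟨c1, hc1, h1⟩ := hx
            obtain ⟨c2, hc2, h2⟩ := hy
            refine ⟨c1 + c2, fun j => KRF.reg_add (hc1 j) (hc2 j), ?_⟩
            rw [smul_add, h1, h2, ← Finset.sum_add_distrib]
            refine Finset.sum_congr rfl fun j _ => ?_
            rw [Pi.add_apply, map_add, add_mul, add_smul]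
          · obtain ⟨c1, hc1, h1⟩ := hx
            refine ⟨-c1, fun j => KRF.reg_neg (hc1 j), ?_⟩
            rw [smul_neg, h1, ← Finset.sum_neg_distrib]
            refine Finset.sum_congr rfl fun j _ => ?_
            rw [Pi.neg_apply, map_neg, neg_mul, neg_smul]
        · obtain ⟨c1, hc1, h1⟩ := hx
          obtain ⟨c2, hc2, h2⟩ := hy
          refine ⟨c1 + c2, fun j => KRF.reg_add (hc1 j) (hc2 j), ?_⟩
          rw [h1, h2, ← Finset.sum_add_distrib]
          refine Finset.sum_congr rfl fun j _ => ?_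
          rw [Pi.add_apply, map_add, add_mul, add_smul]
        · obtain ⟨c1, hc1, h1⟩ := hx
          refine ⟨-c1, fun j => KRF.reg_neg (hc1 j), ?_⟩
          rw [h1, ← Finset.sum_neg_distrib]
          refine Finset.sum_congr rfl fun j _ => ?_
          rw [Pi.neg_apply, map_neg, neg_mul, neg_smul]
      have h1 : (θ ^ (n-1)) • u ∈ FM 0 := by
        have h := memFM0 1 KRF.reg_one (n-1) (by omega)
        rwa [map_one, one_mul] at h
      have h2 := H 0 _ h1
      have hn' : n - 1 + 1 = n := by omega
      rw [smul_smul, ← pow_succ', hn'] at h2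
      obtain ⟨c, hc, hcm⟩ := FM0repr _ h2
      have hzero : ∑ j : Fin n, (φ ((c j) + a (j : ℕ)) * θ ^ (j : ℕ)) • u = 0 := by
        have hsum : ∑ j : Fin n, (φ (a (j : ℕ)) * θ ^ (j : ℕ)) • u
            = ∑ i' ∈ Finset.range n, (φ (a i') * θ ^ i') • u :=
          Fin.sum_univ_eq_sum_range (fun i' => (φ (a i') * θ ^ i') • u) n
        have : ∑ j : Fin n, (φ ((c j) + a (j : ℕ)) * θ ^ (j : ℕ)) • u
            = (∑ j : Fin n, (φ (c j) * θ ^ (j : ℕ)) • u)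
              + ∑ j : Fin n, (φ (a (j : ℕ)) * θ ^ (j : ℕ)) • u := by
          rw [← Finset.sum_add_distrib]
          refine Finset.sum_congr rfl fun j _ => ?_
          rw [map_add, add_mul, add_smul]
        rw [this, ← hcm, hsum, hrel, neg_add_cancel]
      have hz := hindep _ hzero ⟨i, hilt⟩
      have : a i = -(c ⟨i, hilt⟩) := by
        have := eq_neg_of_add_eq_zero_right hz
        simpa using this
      rw [this]
      exact KRF.reg_neg (hc _)
  · -- coefficients regular at 0 → Kashiwara regular
    intro hreg
    have θF₀ : ∀ v ∈ F₀, θ • v ∈ FM 0 := by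
      intro v hv
      rw [hF₀] at hv
      refine AddSubgroup.closure_induction (p := fun v _ => θ • v ∈ FM 0) (fun x hx => ?_)
        (by beta_reduce; rw [smul_zero]; exact zero_mem _)
        (fun x y _ _ hx hy => by beta_reduce; rw [smul_add]; exact add_mem hx hy)
        (fun x _ hx => by beta_reduce; rw [smul_neg]; exact neg_mem hx) hv
      obtain ⟨p, i, hi, rfl⟩ := hx
      have key : θ • ((φ (algebraMap (Polynomial K) (RatFunc K) p) * θ ^ i) • u)
          = (φ (algebraMap (Polynomial K) (RatFunc K) p) * θ ^ (i+1)) • u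
            + (φ (RatFunc.X * derR (algebraMap (Polynomial K) (RatFunc K) p)) * θ ^ i) • u := by
        rw [smul_smul, ← add_smul]
        congr 1
        rw [← mul_assoc, tφ, add_mul, mul_assoc, ← pow_succ']
      rw [key]
      refine add_mem ?_
        (memFM0 _ (KRF.reg_mul KRF.reg_X (regder (KRF.reg_poly p))) i hi)
      rcases lt_or_eq_of_le (Nat.succ_le_of_lt hi) with h | h
      · exact memFM0 _ (KRF.reg_poly p) (i+1) h
      · have h' : i + 1 = n := h
        rw [h', ← smul_smul, hrel, smul_neg, Finset.smul_sum]
        refine neg_mem (AddSubgroup.sum_mem _ fun i' hi' => ?_)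
        rw [smul_smul, ← mul_assoc, ← map_mul]
        exact memFM0 _
          (KRF.reg_mul (KRF.reg_poly p) (hreg i' (le_of_lt (Finset.mem_range.mp hi'))))
          i' (Finset.mem_range.mp hi')
    intro k m hm
    rw [hFM k] at hm
    refine AddSubgroup.closure_induction (p := fun m _ => θ • m ∈ FM k) (fun x hx => ?_)
      (by beta_reduce; rw [smul_zero]; exact zero_mem _)
      (fun x y _ _ hx hy => by beta_reduce; rw [smul_add]; exact add_mem hx hy)
      (fun x _ hx => by beta_reduce; rw [smul_neg]; exact neg_mem hx) hm
    obtain ⟨w, hw, v, hv, rfl⟩ := hx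
    rw [hFD k] at hw
    refine AddSubgroup.closure_induction (p := fun w _ => θ • (w • v) ∈ FM k) (fun x hx => ?_)
      (by beta_reduce; rw [zero_smul, smul_zero]; exact zero_mem _)
      (fun x y _ _ hx hy => by beta_reduce; rw [add_smul, smul_add]; exact add_mem hx hy)
      (fun x _ hx => by beta_reduce; rw [neg_smul, smul_neg]; exact neg_mem hx) hw
    obtain ⟨f, hf, j, hj, rfl⟩ := hx
    have hwFD : φ f * d ^ j ∈ FD k := by
      rw [hFD k]; exact AddSubgroup.subset_closure ⟨f, hf, j, hj, rfl⟩
    have hw2FD : φ (RatFunc.X * derR f) * d ^ j ∈ FD k := by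
      rw [hFD k]
      exact AddSubgroup.subset_closure
        ⟨RatFunc.X * derR f, KRF.reg_mul KRF.reg_X (regder hf), j, hj, rfl⟩
    have key : θ * (φ f * d ^ j)
        = (φ f * d ^ j) * θ + φ (RatFunc.X * derR f) * d ^ j - j • (φ f * d ^ j) := by
      rw [← mul_assoc, tφ, add_mul, mul_assoc, tdp j, mul_sub, mul_smul_comm, ← mul_assoc]
      abel
    rw [smul_smul, key, sub_smul, add_smul]
    have t1 : ((φ f * d ^ j) * θ) • v = (φ f * d ^ j) • (θ • v) := by rw [mul_smul]
    have t3 : (j • (φ f * d ^ j)) • v = j • ((φ f * d ^ j) • v) := by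
      rw [nsmul_eq_mul, mul_smul, Nat.cast_smul_eq_nsmul]
    rw [t1, t3]
    refine sub_mem (add_mem ?_ ?_) (nsmul_mem ?_ j)
    · exact smulFM k _ hwFD _ (θF₀ v hv)
    · exact smulFM k _ hw2FD _ (hF₀FM0 v hv)
    · exact smulFM k _ hwFD _ (hF₀FM0 v hv)
end

section
/- Let A = K[x,x^{-1}] (char K = 0) and let (E,∇) be a free A-module of rank m with connection such that the matrix of ∂ in some basis has entries in A with poles of order ≤ s+1 at 0 (i.e. x^{s+1}∂ preserves the lattice L spanned by the basis over K[x]). Suppose moreover that in Gr of the order-filtered ring of differential operators, the annihilator of Gr_F(E) for the filtration F^i = D_i·L is a radical ideal. Then x∂ preserves L_{η} after localization and completion at 0, i.e. the connection is regular at 0. -/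
noncomputable section

/-- The derivative `d/dx` on Laurent polynomials, as a `K`-linear map
(`T^n ↦ n·T^{n-1}`). -/
def lder (K : Type*) [CommRing K] : LaurentPolynomial K →ₗ[K] LaurentPolynomial K :=
  (Finsupp.lsum K fun (n : ℤ) =>
    LinearMap.toSpanSingleton K (LaurentPolynomial K)
      ((n : K) • LaurentPolynomial.T (n - 1))) ∘ₗ
    (AddMonoidAlgebra.coeffLinearEquiv K).toLinearMap

variable (K : Type*) [Field K] (m : ℕ)

/-- Multiplication by a Laurent polynomial, as a `K`-linear endomorphism of the free
module `E = A^m`. -/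
def smulT (a : LaurentPolynomial K) :
    (Fin m → LaurentPolynomial K) →ₗ[K] (Fin m → LaurentPolynomial K) :=
  (LinearMap.lsmul (LaurentPolynomial K) (Fin m → LaurentPolynomial K) a).restrictScalars K

/-- The order filtration on differential operators with polynomial coefficients acting on
`E`, built from the connection `nab`:  `OpF 0` is spanned by multiplications by
polynomials, and `OpF (k+1) = OpF k + OpF k ∘ nab`. -/
def OpF (nab : (Fin m → LaurentPolynomial K) →ₗ[K] (Fin m → LaurentPolynomial K)) :
    ℕ → Submodule K ((Fin m → LaurentPolynomial K) →ₗ[K] (Fin m → LaurentPolynomial K))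
  | 0 => Submodule.span K {f | ∃ k : ℕ, f = smulT K m (LaurentPolynomial.T (k : ℤ))}
  | k + 1 => OpF nab k ⊔ Submodule.span K {g | ∃ h ∈ OpF nab k, g = h ∘ₗ nab}

/-- The standard `K[x]`-lattice in `E = A^m`, spanned by `x^k e_i`. -/
def stdLat : Submodule K (Fin m → LaurentPolynomial K) :=
  Submodule.span K {v | ∃ (k : ℕ) (i : Fin m),
    v = (LaurentPolynomial.T (k : ℤ) : LaurentPolynomial K) • (Pi.single i 1 : Fin m → LaurentPolynomial K)}

/-- The good filtration `F^j = D_j · L` of `E` induced by the lattice `L` (extended by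
zero in negative degrees). -/
def latFilt (nab : (Fin m → LaurentPolynomial K) →ₗ[K] (Fin m → LaurentPolynomial K))
    (j : ℤ) : Submodule K (Fin m → LaurentPolynomial K) :=
  if j < 0 then ⊥ else
    Submodule.span K {v | ∃ f ∈ OpF K m nab j.toNat, ∃ w ∈ stdLat K m, v = f w}

end

namespace RegAux
open LaurentPolynomial

variable {K : Type*} [Field K] {m : ℕ}
variable (nab : (Fin m → LaurentPolynomial K) →ₗ[K] (Fin m → LaurentPolynomial K))

lemma lder_T (n : ℤ) : lder K (T n) = (n : K) • T (n - 1) := by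
  rw [lder, T]; erw [LinearMap.comp_apply]; erw [Finsupp.lsum_single]; simp [LinearMap.toSpanSingleton_apply]

lemma T_smul_T (a b : ℤ) (v : Fin m → LaurentPolynomial K) :
    (T a : LaurentPolynomial K) • (T b : LaurentPolynomial K) • v
      = (T (a + b) : LaurentPolynomial K) • v := by
  rw [smul_smul, ← T_add]

lemma smulT_apply (a : LaurentPolynomial K) (v : Fin m → LaurentPolynomial K) :
    smulT K m a v = a • v := rfl

lemma pow_succ_apply (i : ℕ) (v : Fin m → LaurentPolynomial K) :
    (nab ^ (i + 1)) v = nab ((nab ^ i) v) := by rw [pow_succ']; rfl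

lemma pow_zero_apply (v : Fin m → LaurentPolynomial K) : (nab ^ 0) v = v := by
  rw [pow_zero]; rfl

/-- `nab (T k • v)`, with the derivative term spelled out. -/
lemma leib_nat (hLeib : ∀ (a : LaurentPolynomial K) (v : Fin m → LaurentPolynomial K),
      nab (a • v) = lder K a • v + a • nab v) (k : ℤ) (v : Fin m → LaurentPolynomial K) :
    nab ((T k : LaurentPolynomial K) • v)
      = (k : K) • ((T (k - 1) : LaurentPolynomial K) • v)
        + (T k : LaurentPolynomial K) • nab v := by
  rw [hLeib, lder_T, smul_assoc]

lemma stdLat_T_smul (k : ℕ) {v : Fin m → LaurentPolynomial K} (hv : v ∈ stdLat K m) :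
    (T (k : ℤ) : LaurentPolynomial K) • v ∈ stdLat K m := by
  have h : stdLat K m ≤ (stdLat K m).comap (smulT K m (T (k : ℤ))) := by
    rw [stdLat, Submodule.span_le]
    rintro v ⟨l, i, rfl⟩
    simp only [SetLike.mem_coe, Submodule.mem_comap, smulT_apply, T_smul_T]
    exact Submodule.subset_span ⟨k + l, i, rfl⟩
  exact h hv

/-- Auxiliary description of the filtration `F`. -/
noncomputable def Fn (n : ℕ) : Submodule K (Fin m → LaurentPolynomial K) :=
  Submodule.span K {v | ∃ (k i : ℕ) (w : Fin m → LaurentPolynomial K),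
    i ≤ n ∧ w ∈ stdLat K m ∧ v = (T (k : ℤ) : LaurentPolynomial K) • (nab ^ i) w}

lemma Fn_mono {a b : ℕ} (h : a ≤ b) : Fn nab a ≤ Fn nab b := by
  apply Submodule.span_mono
  rintro v ⟨k, i, w, hi, hw, rfl⟩
  exact ⟨k, i, w, hi.trans h, hw, rfl⟩

lemma mem_Fn_of_mem_stdLat (n : ℕ) {w : Fin m → LaurentPolynomial K}
    (hw : w ∈ stdLat K m) : w ∈ Fn nab n := by
  refine Submodule.subset_span ⟨0, 0, w, Nat.zero_le _, hw, ?_⟩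
  rw [pow_zero_apply]
  norm_num [T_zero]

lemma Fn_zero : Fn nab 0 = stdLat K m := by
  apply le_antisymm
  · rw [Fn, Submodule.span_le]
    rintro v ⟨k, i, w, hi, hw, rfl⟩
    interval_cases i
    rw [pow_zero_apply]
    exact stdLat_T_smul k hw
  · intro w hw; exact mem_Fn_of_mem_stdLat nab 0 hw

lemma Fn_T_smul (k n : ℕ) {v : Fin m → LaurentPolynomial K} (hv : v ∈ Fn nab n) :
    (T (k : ℤ) : LaurentPolynomial K) • v ∈ Fn nab n := by
  have h : Fn nab n ≤ (Fn nab n).comap (smulT K m (T (k : ℤ))) := by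
    rw [Fn, Submodule.span_le]
    rintro v ⟨l, i, w, hi, hw, rfl⟩
    simp only [SetLike.mem_coe, Submodule.mem_comap, smulT_apply, T_smul_T]
    exact Submodule.subset_span ⟨k + l, i, w, hi, hw, rfl⟩
  exact h hv

section leib
variable (hLeib : ∀ (a : LaurentPolynomial K) (v : Fin m → LaurentPolynomial K),
      nab (a • v) = lder K a • v + a • nab v)
include hLeib

lemma Fn_nab (n : ℕ) {v : Fin m → LaurentPolynomial K} (hv : v ∈ Fn nab n) :
    nab v ∈ Fn nab (n + 1) := by
  have h : Fn nab n ≤ (Fn nab (n + 1)).comap nab := by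
    rw [Fn, Submodule.span_le]
    rintro v ⟨k, i, w, hi, hw, rfl⟩
    simp only [SetLike.mem_coe, Submodule.mem_comap]
    rw [leib_nat nab hLeib]
    apply Submodule.add_mem
    · rcases k with _ | k
      · simp
      · apply Submodule.smul_mem
        refine Submodule.subset_span ⟨k, i, w, hi.trans (Nat.le_succ n), hw, ?_⟩
        congr 2
        push_cast; ring
    · rw [← pow_succ_apply]
      exact Submodule.subset_span ⟨k, i + 1, w, by omega, hw, rfl⟩
  exact h hv

lemma Fn_nab_pow (n i : ℕ) {v : Fin m → LaurentPolynomial K} (hv : v ∈ Fn nab n) :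
    (nab ^ i) v ∈ Fn nab (n + i) := by
  induction i with
  | zero => rw [pow_zero_apply]; exact hv
  | succ i ih => rw [pow_succ_apply]; exact Fn_nab nab hLeib _ ih

/-- Powers of `x∂` land in the span of the `x^i ∂^i`. -/
lemma Qpow_mem (t : ℕ) (v : Fin m → LaurentPolynomial K) :
    ((smulT K m (T (1 : ℤ)) ∘ₗ nab) ^ (t + 1)) v ∈
      Submodule.span K {u | ∃ i : ℕ, i ≤ t ∧
        u = (T ((i : ℤ) + 1) : LaurentPolynomial K) • (nab ^ (i + 1)) v} := by
  induction t with
  | zero =>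
    apply Submodule.subset_span
    refine ⟨0, le_refl 0, ?_⟩
    rw [pow_one]
    norm_num
    rfl
  | succ t ih =>
    rw [pow_succ_apply]
    set Q := smulT K m (T (1 : ℤ)) ∘ₗ nab with hQ
    have step : Submodule.span K {u | ∃ i : ℕ, i ≤ t ∧
          u = (T ((i : ℤ) + 1) : LaurentPolynomial K) • (nab ^ (i + 1)) v} ≤
        (Submodule.span K {u | ∃ i : ℕ, i ≤ t + 1 ∧
          u = (T ((i : ℤ) + 1) : LaurentPolynomial K) • (nab ^ (i + 1)) v}).comap Q := by
      rw [Submodule.span_le]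
      rintro u ⟨i, hi, rfl⟩
      simp only [SetLike.mem_coe, Submodule.mem_comap]
      have hQapp : Q ((T ((i : ℤ) + 1) : LaurentPolynomial K) • (nab ^ (i + 1)) v)
          = (T (1 : ℤ) : LaurentPolynomial K) •
              nab ((T ((i : ℤ) + 1) : LaurentPolynomial K) • (nab ^ (i + 1)) v) := rfl
      rw [hQapp, leib_nat nab hLeib, smul_add]
      apply Submodule.add_mem
      · rw [smul_comm]
        apply Submodule.smul_mem
        rw [T_smul_T, show (1 : ℤ) + ((i : ℤ) + 1 - 1) = (i : ℤ) + 1 by ring]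
        exact Submodule.subset_span ⟨i, hi.trans (Nat.le_succ t), rfl⟩
      · rw [T_smul_T, show (1 : ℤ) + ((i : ℤ) + 1) = ((i : ℤ) + 1) + 1 by ring,
            ← pow_succ_apply]
        exact Submodule.subset_span ⟨i + 1, by omega, by push_cast; ring_nf⟩
    exact step (ih)

variable (s : ℕ)
variable (hpole : ∀ v ∈ stdLat K m,
      (LaurentPolynomial.T ((s : ℤ) + 1) : LaurentPolynomial K) • nab v ∈ stdLat K m)
include hpole

/-- The operator `x^{s+1}∂` preserves every step of the filtration. -/
lemma Fn_R (n : ℕ) : ∀ {v : Fin m → LaurentPolynomial K}, v ∈ Fn nab n →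
    (T ((s : ℤ) + 1) : LaurentPolynomial K) • nab v ∈ Fn nab n := by
  induction n with
  | zero =>
    intro v hv
    rw [Fn_zero] at hv ⊢
    exact hpole v hv
  | succ n ih =>
    intro v hv
    have key : Fn nab (n + 1) ≤
        ((Fn nab (n + 1)).comap (smulT K m (T ((s : ℤ) + 1)))).comap nab := by
      rw [Fn, Submodule.span_le]
      rintro v ⟨k, i, w, hi, hw, rfl⟩
      simp only [SetLike.mem_coe, Submodule.mem_comap, smulT_apply]
      rcases i with _ | i'
      · rw [pow_zero_apply]
        have h1 : (T (k : ℤ) : LaurentPolynomial K) • w ∈ stdLat K m := stdLat_T_smul k hw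
        have h2 := hpole _ h1
        rw [← Fn_zero (nab := nab)] at h2
        exact Fn_mono nab (Nat.zero_le _) h2
      · set u := (nab ^ i') w with hu
        have hu_mem : u ∈ Fn nab n := by
          refine Submodule.subset_span ⟨0, i', w, by omega, hw, ?_⟩
          norm_num [T_zero]
          exact hu
        have hnu : (nab ^ (i' + 1)) w = nab u := pow_succ_apply nab i' w
        have hZ : (T ((s : ℤ) + 1) : LaurentPolynomial K) • nab u ∈ Fn nab n := ih hu_mem
        have hnZ : nab ((T ((s : ℤ) + 1) : LaurentPolynomial K) • nab u) ∈ Fn nab (n + 1) :=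
          Fn_nab nab hLeib n hZ
        have e2 := leib_nat nab hLeib ((s : ℤ) + 1) (nab u)
        rw [show (s : ℤ) + 1 - 1 = (s : ℤ) by ring] at e2
        have hTs : (T (s : ℤ) : LaurentPolynomial K) • nab u ∈ Fn nab (n + 1) := by
          rw [← hnu]
          exact Submodule.subset_span ⟨s, i' + 1, w, by omega, hw, rfl⟩
        have hmain : (T ((s : ℤ) + 1) : LaurentPolynomial K) • nab (nab u) ∈ Fn nab (n + 1) := by
          have e3 : (T ((s : ℤ) + 1) : LaurentPolynomial K) • nab (nab u)
              = nab ((T ((s : ℤ) + 1) : LaurentPolynomial K) • nab u)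
                - (((s : ℤ) + 1 : ℤ) : K) • ((T (s : ℤ) : LaurentPolynomial K) • nab u) := by
            rw [e2]; abel
          rw [e3]
          exact Submodule.sub_mem _ hnZ (Submodule.smul_mem _ _ hTs)
        rw [hnu, leib_nat nab hLeib, smul_add]
        apply Submodule.add_mem
        · rcases k with _ | k
          · simp
          · rw [smul_comm]
            apply Submodule.smul_mem
            rw [T_smul_T, ← hnu]
            refine Submodule.subset_span ⟨s + (k + 1), i' + 1, w, by omega, hw, ?_⟩
            congr 2
            push_cast; ring
        · rw [T_smul_T, show (s : ℤ) + 1 + (k : ℤ) = (k : ℤ) + ((s : ℤ) + 1) by ring,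
              ← T_smul_T]
          exact Fn_T_smul nab k (n + 1) hmain
    exact key hv

/-- Key estimate: `(x∂)^{s+1}` shifts the filtration by only `s`. -/
lemma Qpow_filt (n : ℕ) {v : Fin m → LaurentPolynomial K} (hv : v ∈ Fn nab n) :
    ((smulT K m (T (1 : ℤ)) ∘ₗ nab) ^ (s + 1)) v ∈ Fn nab (n + s) := by
  have h := Qpow_mem nab hLeib s v
  have hle : Submodule.span K {u | ∃ i : ℕ, i ≤ s ∧
      u = (T ((i : ℤ) + 1) : LaurentPolynomial K) • (nab ^ (i + 1)) v} ≤ Fn nab (n + s) := by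
    rw [Submodule.span_le]
    rintro u ⟨i, hi, rfl⟩
    rcases eq_or_lt_of_le hi with heq | hlt
    · subst heq
      rw [pow_succ_apply]
      exact Fn_R nab hLeib i hpole (n + i) (Fn_nab_pow nab hLeib n i hv)
    · have h1 : (nab ^ (i + 1)) v ∈ Fn nab (n + (i + 1)) := Fn_nab_pow nab hLeib n (i + 1) hv
      have h2 : (nab ^ (i + 1)) v ∈ Fn nab (n + s) := Fn_mono nab (by omega) h1
      have h3 := Fn_T_smul nab (i + 1) (n + s) h2
      rwa [show ((i + 1 : ℕ) : ℤ) = (i : ℤ) + 1 by push_cast; ring] at h3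
  exact hle h
end leib

/-- Characterization of the operator filtration. -/
lemma opf_char (n : ℕ) : OpF K m nab n =
    Submodule.span K {f | ∃ (k i : ℕ), i ≤ n ∧
      f = smulT K m (T (k : ℤ)) ∘ₗ (nab ^ i)} := by
  induction n with
  | zero =>
    rw [OpF]
    apply le_antisymm <;> rw [Submodule.span_le]
    · rintro f ⟨k, rfl⟩
      refine Submodule.subset_span ⟨k, 0, le_refl 0, ?_⟩
      rw [pow_zero]
      rfl
    · rintro f ⟨k, i, hi, rfl⟩
      interval_cases i
      refine Submodule.subset_span ⟨k, ?_⟩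
      rw [pow_zero]
      rfl
  | succ n ih =>
    rw [OpF]
    apply le_antisymm
    · apply sup_le
      · rw [ih]
        apply Submodule.span_mono
        rintro f ⟨k, i, hi, rfl⟩
        exact ⟨k, i, hi.trans (Nat.le_succ n), rfl⟩
      · rw [Submodule.span_le]
        rintro g ⟨h, hh, rfl⟩
        rw [ih] at hh
        induction hh using Submodule.span_induction with
        | mem f hf =>
          obtain ⟨k, i, hi, rfl⟩ := hf
          refine Submodule.subset_span ⟨k, i + 1, by omega, ?_⟩
          rw [pow_succ]
          rw [LinearMap.comp_assoc]
          rfl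
        | zero => simp
        | add f g _ _ hf hg =>
          rw [LinearMap.add_comp]
          exact Submodule.add_mem _ hf hg
        | smul c f _ hf =>
          rw [LinearMap.smul_comp]
          exact Submodule.smul_mem _ c hf
    · rw [Submodule.span_le]
      rintro f ⟨k, i, hi, rfl⟩
      rcases Nat.lt_or_ge i (n + 1) with hlt | hge
      · apply Submodule.mem_sup_left
        rw [ih]
        exact Submodule.subset_span ⟨k, i, by omega, rfl⟩
      · have : i = n + 1 := by omega
        subst this
        apply Submodule.mem_sup_right
        apply Submodule.subset_span
        refine ⟨smulT K m (T (k : ℤ)) ∘ₗ (nab ^ n), ?_, ?_⟩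
        · rw [ih]; exact Submodule.subset_span ⟨k, n, le_refl n, rfl⟩
        · rw [pow_succ, LinearMap.comp_assoc]
          rfl

lemma latFilt_nat (n : ℕ) : latFilt K m nab (n : ℤ) = Fn nab n := by
  rw [latFilt, if_neg (by omega)]
  have htn : ((n : ℤ)).toNat = n := Int.toNat_natCast n
  rw [htn]
  apply le_antisymm
  · rw [Submodule.span_le]
    rintro v ⟨f, hf, w, hw, rfl⟩
    rw [opf_char] at hf
    induction hf using Submodule.span_induction with
    | mem f hf =>
      obtain ⟨k, i, hi, rfl⟩ := hf
      exact Submodule.subset_span ⟨k, i, w, hi, hw, rfl⟩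
    | zero => simp
    | add f g _ _ hf hg =>
      rw [LinearMap.add_apply]
      exact Submodule.add_mem _ hf hg
    | smul c f _ hf =>
      rw [LinearMap.smul_apply]
      exact Submodule.smul_mem _ c hf
  · rw [Fn, Submodule.span_le]
    rintro v ⟨k, i, w, hi, hw, rfl⟩
    refine Submodule.subset_span ⟨smulT K m (T (k : ℤ)) ∘ₗ (nab ^ i), ?_, w, hw, rfl⟩
    rw [opf_char]
    exact Submodule.subset_span ⟨k, i, hi, rfl⟩

lemma latFilt_neg {j : ℤ} (hj : j < 0) : latFilt K m nab j = ⊥ := by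
  rw [latFilt, if_pos hj]

lemma Q_mem_OpF : smulT K m (T (1 : ℤ)) ∘ₗ nab ∈ OpF K m nab 1 := by
  rw [OpF]
  apply Submodule.mem_sup_right
  apply Submodule.subset_span
  refine ⟨smulT K m (T (1 : ℤ)), ?_, rfl⟩
  rw [OpF]
  exact Submodule.subset_span ⟨1, by norm_num⟩

end RegAux

/-- One-dimensional case of (Kashiwara-regular ⟹ regular connection).  Let
`A = K[x,x⁻¹]` (`char K = 0`), `E = A^m` free with connection `nab` whose matrix has poles
of order `≤ s+1` at `0` (i.e. `x^{s+1}∂` preserves the standard lattice `L`).  Suppose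
that the annihilator of `Gr_F E`, for the good filtration `F^i = D_i·L`, is a radical
ideal (elementwise: if the symbol of the `ks`-th power of an operator of order `k`
annihilates `Gr_F E`, so does the symbol of the operator).  Then the connection is
regular at `0`: there is a finitely generated `K[x]`-lattice `L'` generating `E` over `A`
and stable under `x∂`. -/
theorem regular_connection_of_radical_annihilator
    (K : Type*) [Field K] [CharZero K] (m : ℕ)
    (nab : (Fin m → LaurentPolynomial K) →ₗ[K] (Fin m → LaurentPolynomial K))
    (hLeib : ∀ (a : LaurentPolynomial K) (v : Fin m → LaurentPolynomial K),
      nab (a • v) = lder K a • v + a • nab v)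
    (s : ℕ)
    (hpole : ∀ v ∈ stdLat K m,
      (LaurentPolynomial.T ((s : ℤ) + 1) : LaurentPolynomial K) • nab v ∈ stdLat K m)
    (hrad : ∀ (k : ℕ), ∀ P ∈ OpF K m nab k, ∀ t : ℕ, 1 ≤ t →
      (∀ j : ℤ, ∀ v ∈ latFilt K m nab j, (P ^ t) v ∈ latFilt K m nab (j + k * t - 1)) →
      (∀ j : ℤ, ∀ v ∈ latFilt K m nab j, P v ∈ latFilt K m nab (j + k - 1))) :
    ∃ L' : Submodule K (Fin m → LaurentPolynomial K),
      (∃ S : Finset (Fin m → LaurentPolynomial K), L' = Submodule.span K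
        {v | ∃ t ∈ S, ∃ k : ℕ, v = (LaurentPolynomial.T (k : ℤ) : LaurentPolynomial K) • t}) ∧
      Submodule.span (LaurentPolynomial K) (L' : Set (Fin m → LaurentPolynomial K)) = ⊤ ∧
      ∀ v ∈ L', (LaurentPolynomial.T 1 : LaurentPolynomial K) • nab v ∈ L' := by
  classical
  open LaurentPolynomial RegAux in
  refine ⟨stdLat K m, ?_, ?_, ?_⟩
  · refine ⟨Finset.univ.image (fun i : Fin m => (Pi.single i 1 : Fin m → LaurentPolynomial K)), ?_⟩
    rw [stdLat]
    congr 1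
    ext v
    constructor
    · rintro ⟨k, i, rfl⟩
      exact ⟨Pi.single i 1, Finset.mem_image_of_mem _ (Finset.mem_univ i), k, rfl⟩
    · rintro ⟨t, ht, k, rfl⟩
      obtain ⟨i, _, rfl⟩ := Finset.mem_image.1 ht
      exact ⟨k, i, rfl⟩
  · rw [eq_top_iff]
    intro v _
    have hv : v = ∑ i : Fin m, (v i) • (Pi.single i 1 : Fin m → LaurentPolynomial K) := by
      funext j
      simp [Finset.sum_apply, Pi.single_apply, Finset.sum_ite_eq']
    rw [hv]
    apply Submodule.sum_mem
    intro i _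
    apply Submodule.smul_mem
    apply Submodule.subset_span
    refine Submodule.subset_span (R := K) ?_
    exact ⟨0, i, by norm_num [LaurentPolynomial.T_zero]⟩
  · intro v hv
    set Q := smulT K m (LaurentPolynomial.T (1 : ℤ)) ∘ₗ nab with hQ
    have hyp : ∀ j : ℤ, ∀ v ∈ latFilt K m nab j,
        (Q ^ (s + 1)) v ∈ latFilt K m nab (j + (1 : ℕ) * ((s + 1 : ℕ)) - 1) := by
      intro j v hvj
      rcases lt_or_ge j 0 with hj | hj
      · rw [latFilt_neg nab hj] at hvj
        have : v = 0 := by simpa using hvj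
        subst this
        simp only [map_zero]
        exact Submodule.zero_mem _
      · obtain ⟨n, rfl⟩ : ∃ n : ℕ, j = (n : ℤ) := ⟨j.toNat, by omega⟩
        rw [latFilt_nat] at hvj
        have h := Qpow_filt nab hLeib s hpole n hvj
        have harith : ((n : ℤ) + (1 : ℕ) * ((s + 1 : ℕ)) - 1) = ((n + s : ℕ) : ℤ) := by
          push_cast; ring
        rw [harith, latFilt_nat]
        exact h
    have HQ := hrad 1 Q (Q_mem_OpF nab) (s + 1) (by omega) hyp
    have h0 := HQ 0 v (by rw [show (0 : ℤ) = ((0 : ℕ) : ℤ) by norm_num, latFilt_nat, Fn_zero]; exact hv)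
    rw [show (0 : ℤ) + (1 : ℕ) - 1 = ((0 : ℕ) : ℤ) by norm_num, latFilt_nat, Fn_zero] at h0
    exact h0

-- #print axioms check
end

section
/- Let A be a commutative Noetherian ring, M an A-module, and F, G two exhaustive increasing filtrations of M by finitely generated A-submodules that are both good with respect to a filtered ring R acting on M (with Gr(R) commutative Noetherian). Then F and G are commensurable: there exists k ≥ 0 such that F^{i−k}M ⊆ G^i M ⊆ F^{i+k}M for all i. -/
/-- Let `A` be a commutative Noetherian ring and `M` a module over a filtered ring `R`
(with `A ⊆ F^0 R` via `ι`, and commutative Noetherian associated graded ring), restricting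
to an `A`-module.  Let `F`, `G` be two exhaustive increasing filtrations of `M` by
finitely generated `A`-submodules which are both good (the associated graded modules are
finitely generated over `Gr R`, i.e. both are generated by finitely many homogeneous
symbols).  Then `F` and `G` are commensurable: there exists `k ≥ 0` with
`F^{i-k} M ⊆ G^i M ⊆ F^{i+k} M` for all `i`. -/
theorem good_filtrations_commensurable
    (A : Type*) [CommRing A] [IsNoetherianRing A]
    (R : Type*) [Ring R] (ι : A →+* R)
    (FR : ℤ → AddSubgroup R)
    (hmono : Monotone FR) (hone : (1 : R) ∈ FR 0)
    (hmul : ∀ i j : ℤ, ∀ a ∈ FR i, ∀ b ∈ FR j, a * b ∈ FR (i + j))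
    (hexh : ∀ w : R, ∃ i, w ∈ FR i)
    (hA : ∀ a : A, ι a ∈ FR 0)
    (hcomm : ∀ i j : ℤ, ∀ a ∈ FR i, ∀ b ∈ FR j, a * b - b * a ∈ FR (i + j - 1))
    (M : Type*) [AddCommGroup M] [Module R M] [Module A M]
    (hcompat : ∀ (a : A) (m : M), ι a • m = a • m)
    (F G : ℤ → Submodule A M)
    (hFmono : Monotone F) (hGmono : Monotone G)
    (hFexh : ∀ m : M, ∃ j, m ∈ F j) (hGexh : ∀ m : M, ∃ j, m ∈ G j)
    (hFfg : ∀ j, (F j).FG) (hGfg : ∀ j, (G j).FG)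
    (hFcomp : ∀ i j : ℤ, ∀ w ∈ FR i, ∀ m ∈ F j, w • m ∈ F (i + j))
    (hGcomp : ∀ i j : ℤ, ∀ w ∈ FR i, ∀ m ∈ G j, w • m ∈ G (i + j))
    (hFgood : ∃ T : Finset (ℤ × M), (∀ p ∈ T, p.2 ∈ F p.1) ∧
      ∀ j : ℤ, (F j : Set M) =
        ↑(AddSubgroup.closure {y | ∃ p ∈ T, ∃ w ∈ FR (j - p.1), y = w • p.2}))
    (hGgood : ∃ T : Finset (ℤ × M), (∀ p ∈ T, p.2 ∈ G p.1) ∧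
      ∀ j : ℤ, (G j : Set M) =
        ↑(AddSubgroup.closure {y | ∃ p ∈ T, ∃ w ∈ FR (j - p.1), y = w • p.2})) :
    ∃ k : ℤ, 0 ≤ k ∧ ∀ i : ℤ, F (i - k) ≤ G i ∧ G i ≤ F (i + k) := by
  have key : ∀ (F G : ℤ → Submodule A M), Monotone G →
      (∀ m : M, ∃ j, m ∈ G j) →
      (∀ i j : ℤ, ∀ w ∈ FR i, ∀ m ∈ G j, w • m ∈ G (i + j)) →
      (∃ T : Finset (ℤ × M), (∀ p ∈ T, p.2 ∈ F p.1) ∧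
        ∀ j : ℤ, (F j : Set M) =
          ↑(AddSubgroup.closure {y | ∃ p ∈ T, ∃ w ∈ FR (j - p.1), y = w • p.2})) →
      ∃ k : ℤ, 0 ≤ k ∧ ∀ j : ℤ, F j ≤ G (j + k) := by
    rintro F G hGmono hGexh hGcomp ⟨T, hT, hFj⟩
    choose n hn using fun p : ℤ × M => hGexh p.2
    refine ⟨((T.sup fun p => (n p - p.1).toNat : ℕ) : ℤ), Int.natCast_nonneg _, ?_⟩
    intro j m hm
    set k : ℤ := ((T.sup fun p => (n p - p.1).toNat : ℕ) : ℤ) with hk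
    have hm' : m ∈ AddSubgroup.closure
        {y | ∃ p ∈ T, ∃ w ∈ FR (j - p.1), y = w • p.2} := by
      have : m ∈ (F j : Set M) := hm
      rwa [hFj j] at this
    have hle : AddSubgroup.closure {y | ∃ p ∈ T, ∃ w ∈ FR (j - p.1), y = w • p.2}
        ≤ (G (j + k)).toAddSubgroup := by
      rw [AddSubgroup.closure_le]
      rintro y ⟨p, hpT, w, hw, rfl⟩
      have h1 : w • p.2 ∈ G (j - p.1 + n p) := hGcomp _ _ w hw p.2 (hn p)
      refine hGmono ?_ h1
      have h2 : ((n p - p.1).toNat : ℤ) ≤ k := by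
        rw [hk]
        exact_mod_cast Finset.le_sup (f := fun p => (n p - p.1).toNat) hpT
      have h3 : n p - p.1 ≤ ((n p - p.1).toNat : ℤ) := Int.self_le_toNat _
      omega
    exact hle hm'
  obtain ⟨k₁, hk₁0, hk₁⟩ := key F G hGmono hGexh hGcomp hFgood
  obtain ⟨k₂, hk₂0, hk₂⟩ := key G F hFmono hFexh hFcomp hGgood
  refine ⟨max k₁ k₂, le_max_of_le_left hk₁0, fun i => ⟨?_, ?_⟩⟩
  · exact le_trans (hk₁ (i - max k₁ k₂)) (hGmono (by omega))
  · exact le_trans (hk₂ i) (hFmono (by omega))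
end
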